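/- arXiv:1711.10178 — 5 statements merged into one kernel-verified Lean document; each statement's English description precedes it below -/
import Mathlib

section
/- Let d ≥ 1 and let M be an n×k lonesum 01 matrix with no all-zero column and no all-zero row. Let c_1, …, c_m be the distinct column vectors of M ordered by strictly increasing weight, let r_1, …, r_m be the distinct row vectors of M ordered by strictly increasing weight (these two lists have the same length m), and set c_0 (resp. r_0) to be the all-zero vector. Then every column vector of M occurs at most d times among the k columns and every row vector of M occurs at most d times among the n rows if and only if w(c_{i+1}) − w(c_i) ≤ d for all i = 0, 1, …, m−1 and w(r_{i+1}) − w(r_i) ≤ d for all i = 0, 1, …, m−1. -/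
open Finset

/-- A 01 matrix (encoded with `Bool` entries) is lonesum iff it avoids the
two 2×2 permutation submatrices. -/
def Lonesum {n k : ℕ} (M : Fin n → Fin k → Bool) : Prop :=
  ∀ i i' : Fin n, ∀ j j' : Fin k, i < i' → j < j' →
    ¬(M i j = true ∧ M i j' = false ∧ M i' j = false ∧ M i' j' = true) ∧
    ¬(M i j = false ∧ M i j' = true ∧ M i' j = true ∧ M i' j' = false)

/-- The weight of a 01 vector: the number of its entries equal to 1. -/
def weight {n : ℕ} (v : Fin n → Bool) : ℕ :=
  (univ.filter fun i => v i = true).card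

/-- The `j`-th column of a 01 matrix. -/
def colOf {n k : ℕ} (M : Fin n → Fin k → Bool) (j : Fin k) : Fin n → Bool :=
  fun i => M i j

/-- The `i`-th row of a 01 matrix. -/
def rowOf {n k : ℕ} (M : Fin n → Fin k → Bool) (i : Fin n) : Fin k → Bool :=
  fun j => M i j

lemma weight_mono' {p : ℕ} {v w : Fin p → Bool}
    (h : ∀ x, v x = true → w x = true) : weight v ≤ weight w := by
  apply Finset.card_le_card
  intro x hx
  simp only [mem_filter, mem_univ, true_and] at hx ⊢
  exact h x hx

lemma ncount_anti' {k m : ℕ} (τ : Fin k → Fin (m+1)) {a b : ℕ} (hab : a ≤ b) :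
    (univ.filter fun j => b ≤ (τ j : ℕ)).card ≤ (univ.filter fun j => a ≤ (τ j : ℕ)).card := by
  apply card_le_card
  intro j hj
  simp only [mem_filter, mem_univ, true_and] at hj ⊢
  omega

lemma ncount_split' {k m : ℕ} (τ : Fin k → Fin (m+1)) (a : ℕ) :
    (univ.filter fun j => a ≤ (τ j : ℕ)).card
      = (univ.filter fun j => (τ j : ℕ) = a).card
        + (univ.filter fun j => a + 1 ≤ (τ j : ℕ)).card := by
  rw [← Finset.card_union_of_disjoint]
  · congr 1
    ext j
    simp only [mem_filter, mem_union, mem_univ, true_and]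
    omega
  · rw [Finset.disjoint_left]
    intro j hj hj'
    simp only [mem_filter, mem_univ, true_and] at hj hj'
    omega

lemma align_aux' (m : ℕ) (g : ℕ → ℕ)
    (hb : ∀ a, 1 ≤ a → a ≤ m → 1 ≤ g a ∧ g a ≤ m)
    (hanti : ∀ a a', 1 ≤ a → a < a' → a' ≤ m → g a' < g a) :
    ∀ a, 1 ≤ a → a ≤ m → g a = m + 1 - a := by
  have claim1 : ∀ b a, a + b = m → 1 ≤ a → m + 1 - a ≤ g a := by
    intro b
    induction b with
    | zero => intro a ha h1; have := hb a h1 (by omega); omega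
    | succ b ih =>
      intro a ha h1
      have h2 := ih (a+1) (by omega) (by omega)
      have h3 := hanti a (a+1) h1 (by omega) (by omega)
      have h4 := hb a h1 (by omega)
      omega
  have claim2 : ∀ a, 1 ≤ a → a ≤ m → g a ≤ m + 1 - a := by
    intro a
    induction a with
    | zero => omega
    | succ a ih =>
      intro h1 h2
      by_cases ha : a = 0
      · subst ha; have := hb (0+1) (by omega) (by omega); omega
      · have h3 := ih (by omega) (by omega)
        have h4 := hanti a (a+1) (by omega) (by omega) h2
        omega
  intro a h1 h2
  have := claim1 (m - a) a (by omega) h1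
  have := claim2 a h1 h2
  omega

lemma lonesum_key {n k m d : ℕ} (M : Fin n → Fin k → Bool) (hM : Lonesum M)
    (hnorowzero : ∀ i, ∃ j, M i j = true)
    (c : Fin (m + 1) → Fin n → Bool) (r : Fin (m + 1) → Fin k → Bool)
    (hc0 : c 0 = fun _ => false) (hr0 : r 0 = fun _ => false)
    (hcdistinct : ∀ v : Fin n → Bool,
      (∃ j, colOf M j = v) ↔ ∃ i : Fin (m + 1), i ≠ 0 ∧ c i = v)
    (hrdistinct : ∀ v : Fin k → Bool,
      (∃ i, rowOf M i = v) ↔ ∃ i : Fin (m + 1), i ≠ 0 ∧ r i = v)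
    (hcmono : ∀ i i' : Fin (m + 1), i < i' → weight (c i) < weight (c i'))
    (hrmono : ∀ i i' : Fin (m + 1), i < i' → weight (r i) < weight (r i')) :
    (∀ j, (univ.filter fun j' => colOf M j' = colOf M j).card ≤ d) ↔
      (∀ i : Fin m, weight (r i.succ) - weight (r i.castSucc) ≤ d) := by
  classical
  -- columns form a chain
  have chain : ∀ j j' : Fin k,
      (∀ i, M i j = true → M i j' = true) ∨ (∀ i, M i j' = true → M i j = true) := by
    intro j j'
    by_contra hcon
    push_neg at hcon
    obtain ⟨⟨i, hij, hij'⟩, ⟨i', hi'j', hi'j⟩⟩ := hcon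
    simp only [ne_eq, Bool.not_eq_true] at hij' hi'j
    have hjj' : j ≠ j' := by rintro rfl; rw [hij] at hij'; exact absurd hij' (by simp)
    have hii' : i ≠ i' := by rintro rfl; rw [hij] at hi'j; exact absurd hi'j (by simp)
    rcases hii'.lt_or_gt with h1 | h1 <;> rcases hjj'.lt_or_gt with h2 | h2
    · exact (hM i i' j j' h1 h2).1 ⟨hij, hij', hi'j, hi'j'⟩
    · exact (hM i i' j' j h1 h2).2 ⟨hij', hij, hi'j', hi'j⟩
    · exact (hM i' i j j' h1 h2).2 ⟨hi'j, hi'j', hij, hij'⟩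
    · exact (hM i' i j' j h1 h2).1 ⟨hi'j', hi'j, hij', hij⟩
  -- c is injective
  have cinj : Function.Injective c := by
    intro a b hab
    by_contra hne
    rcases Ne.lt_or_gt hne with h | h
    · exact absurd (hcmono a b h) (by rw [hab]; simp)
    · exact absurd (hcmono b a h) (by rw [hab]; simp)
  -- c is pointwise monotone
  have cmono : ∀ s t : Fin (m+1), s ≤ t → ∀ x, c s x = true → c t x = true := by
    intro s t hst x hx
    rcases eq_or_lt_of_le hst with rfl | hlt
    · exact hx
    · rcases ne_or_eq s 0 with hs0 | rfl
      · have ht0 : t ≠ 0 := by rintro rfl; exact absurd hlt (by simp)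
        obtain ⟨js, hjs⟩ := (hcdistinct (c s)).mpr ⟨s, hs0, rfl⟩
        obtain ⟨jt, hjt⟩ := (hcdistinct (c t)).mpr ⟨t, ht0, rfl⟩
        rcases chain js jt with h | h
        · have h1 : M x js = true := (congrFun hjs x).trans hx
          exact (congrFun hjt x).symm.trans (h x h1)
        · exfalso
          have hw : weight (c t) ≤ weight (c s) := by
            apply weight_mono'
            intro y hy
            have h1 : M y jt = true := (congrFun hjt y).trans hy
            exact (congrFun hjs y).symm.trans (h y h1)
          exact absurd (hcmono s t hlt) (by omega)
      · rw [hc0] at hx; exact absurd hx (by simp)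
  -- each column is c (τ j)
  have hτ' : ∀ j, ∃ t : Fin (m+1), t ≠ 0 ∧ c t = colOf M j :=
    fun j => (hcdistinct (colOf M j)).mp ⟨j, rfl⟩
  choose τ hτ0 hτc using hτ'
  -- threshold f i of row i
  have hA : ∀ i : Fin n, (univ.filter fun t => c t i = true).Nonempty := by
    intro i
    obtain ⟨j, hj⟩ := hnorowzero i
    exact ⟨τ j, mem_filter.mpr ⟨mem_univ _, (congrFun (hτc j) i).trans hj⟩⟩
  set f : Fin n → Fin (m+1) := fun i => (univ.filter fun t => c t i = true).min' (hA i) with hfdef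
  have hfmem : ∀ i, c (f i) i = true := fun i =>
    (mem_filter.mp ((univ.filter fun t => c t i = true).min'_mem (hA i))).2
  have hfle : ∀ i t, c t i = true → f i ≤ t :=
    fun i t ht => Finset.min'_le _ t (mem_filter.mpr ⟨mem_univ _, ht⟩)
  have hf0 : ∀ i, f i ≠ 0 := by
    intro i h
    have h2 := hfmem i
    rw [h, hc0] at h2
    exact absurd h2 (by simp)
  have hMiff : ∀ i j, M i j = true ↔ f i ≤ τ j := by
    intro i j
    constructor
    · intro h
      exact hfle i (τ j) ((congrFun (hτc j) i).trans h)
    · intro h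
      exact (congrFun (hτc j) i).symm.trans (cmono (f i) (τ j) h i (hfmem i))
  have hrowN : ∀ i, weight (rowOf M i)
      = (univ.filter fun j => ((f i : ℕ)) ≤ (τ j : ℕ)).card := by
    intro i
    unfold weight
    apply congrArg
    apply filter_congr
    intro j _
    show M i j = true ↔ _
    rw [hMiff i j, Fin.le_def]
  -- alignment function g
  have hrex : ∀ s : Fin (m+1), s ≠ 0 → ∃ i, rowOf M i = r s :=
    fun s hs => (hrdistinct (r s)).mpr ⟨s, hs, rfl⟩
  have hgex : ∀ a : ℕ, ∃ v : ℕ, (1 ≤ a ∧ a ≤ m) → ∀ s : Fin (m+1), (s : ℕ) = a →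
      (1 ≤ v ∧ v ≤ m ∧ weight (r s) = (univ.filter fun j => v ≤ (τ j : ℕ)).card) := by
    intro a
    by_cases h : 1 ≤ a ∧ a ≤ m
    · obtain ⟨h1, h2⟩ := h
      have hs0 : (⟨a, by omega⟩ : Fin (m+1)) ≠ 0 := by
        intro hh
        have := congrArg Fin.val hh
        simp at this
        omega
      obtain ⟨i, hi⟩ := hrex ⟨a, by omega⟩ hs0
      refine ⟨(f i : ℕ), fun _ s hsa => ?_⟩
      have hsval : s = ⟨a, by omega⟩ := Fin.ext hsa
      refine ⟨?_, ?_, ?_⟩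
      · have hne : (f i : ℕ) ≠ 0 := fun hh => hf0 i (Fin.ext (by simp [hh]))
        omega
      · have := (f i).isLt; omega
      · rw [hsval, ← hi]; exact hrowN i
    · exact ⟨0, fun hh => absurd hh h⟩
  choose g hg using hgex
  have hganti : ∀ a a', 1 ≤ a → a < a' → a' ≤ m → g a' < g a := by
    intro a a' h1 h2 h3
    have ha := hg a ⟨h1, by omega⟩ ⟨a, by omega⟩ rfl
    have ha' := hg a' ⟨by omega, h3⟩ ⟨a', by omega⟩ rfl
    have hlt : weight (r ⟨a, by omega⟩) < weight (r ⟨a', by omega⟩) :=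
      hrmono _ _ (by simp [Fin.lt_def]; omega)
    rw [ha.2.2, ha'.2.2] at hlt
    by_contra hcon
    push_neg at hcon
    exact absurd (ncount_anti' τ hcon) (by omega)
  have halign : ∀ a, 1 ≤ a → a ≤ m → g a = m + 1 - a := by
    apply align_aux'
    · intro a h1 h2
      have := hg a ⟨h1, h2⟩ ⟨a, by omega⟩ rfl
      exact ⟨this.1, this.2.1⟩
    · exact hganti
  -- weight of r s in terms of τ
  have WN : ∀ s : Fin (m+1),
      weight (r s) = (univ.filter fun j => m + 1 - (s : ℕ) ≤ (τ j : ℕ)).card := by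
    intro s
    by_cases hs : s = 0
    · subst hs
      rw [hr0]
      have h1 : weight (fun _ : Fin k => false) = 0 := by simp [weight]
      rw [h1]
      symm
      rw [Finset.card_eq_zero, Finset.filter_eq_empty_iff]
      intro j _
      have := (τ j).isLt
      simp only [Fin.val_zero]
      omega
    · have hs1 : 1 ≤ (s : ℕ) := by
        have : (s : ℕ) ≠ 0 := fun h => hs (Fin.ext (by simp [h]))
        omega
      have hs2 : (s : ℕ) ≤ m := by have := s.isLt; omega
      have h3 := (hg (s : ℕ) ⟨hs1, hs2⟩ s rfl).2.2
      rw [h3, halign (s : ℕ) hs1 hs2]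
  -- weight gaps = column multiplicities
  have hgap : ∀ i : Fin m, weight (r i.succ) - weight (r i.castSucc)
      = (univ.filter fun j => colOf M j = c ⟨m - (i : ℕ), by omega⟩).card := by
    intro i
    have hi := i.isLt
    have e1 : m + 1 - ((i.succ : Fin (m+1)) : ℕ) = m - (i : ℕ) := by
      rw [Fin.val_succ]; omega
    have e2 : m + 1 - ((i.castSucc : Fin (m+1)) : ℕ) = m - (i : ℕ) + 1 := by
      rw [Fin.coe_castSucc]; omega
    rw [WN i.succ, WN i.castSucc]
    simp only [e1, e2]
    rw [ncount_split' τ (m - (i : ℕ)), Nat.add_sub_cancel]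
    apply congrArg Finset.card
    apply filter_congr
    intro j _
    constructor
    · intro h
      rw [← hτc j]
      exact congrArg c (Fin.ext h)
    · intro h
      have h2 : c (τ j) = c ⟨m - (i : ℕ), by omega⟩ := (hτc j).trans h
      exact congrArg Fin.val (cinj h2)
  constructor
  · intro hcol i
    rw [hgap i]
    have hi := i.isLt
    have hne : (⟨m - (i : ℕ), by omega⟩ : Fin (m+1)) ≠ 0 := by
      intro hh
      have := congrArg Fin.val hh
      simp at this
      omega
    obtain ⟨j₀, hj₀⟩ := (hcdistinct (c ⟨m - (i : ℕ), by omega⟩)).mpr ⟨_, hne, rfl⟩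
    rw [← hj₀]
    exact hcol j₀
  · intro hgaps j
    have ht0 : (τ j : ℕ) ≠ 0 := fun hh => hτ0 j (Fin.ext (by simpa using hh))
    have htm : (τ j : ℕ) ≤ m := by have := (τ j).isLt; omega
    have hi : m - (τ j : ℕ) < m := by omega
    have hres := hgaps ⟨m - (τ j : ℕ), hi⟩
    rw [hgap ⟨m - (τ j : ℕ), hi⟩] at hres
    have he : c (⟨m - ((⟨m - (τ j : ℕ), hi⟩ : Fin m) : ℕ), by omega⟩ : Fin (m+1))
        = colOf M j := by
      have h2 : (⟨m - ((⟨m - (τ j : ℕ), hi⟩ : Fin m) : ℕ), by omega⟩ : Fin (m+1)) = τ j :=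
        Fin.ext (by simp; omega)
      rw [h2, hτc]
    rw [he] at hres
    exact hres

/-- Let `M` be an `n × k` lonesum matrix with no all-zero column or row, let
`c 1 < … < c m` be its distinct column vectors ordered by strictly increasing
weight and `r 1 < … < r m` its distinct row vectors ordered by strictly
increasing weight, with `c 0` and `r 0` the all-zero vectors.  Then every
column occurs at most `d` times and every row occurs at most `d` times iff all
consecutive weight differences `w(c (i+1)) − w(c i)` and
`w(r (i+1)) − w(r i)` are at most `d`. -/
theorem lonesum_multiplicity_iff_weight_gaps {n k m d : ℕ} (hd : 1 ≤ d)
    (M : Fin n → Fin k → Bool) (hM : Lonesum M)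
    (hnocolzero : ∀ j, ∃ i, M i j = true) (hnorowzero : ∀ i, ∃ j, M i j = true)
    (c : Fin (m + 1) → Fin n → Bool) (r : Fin (m + 1) → Fin k → Bool)
    (hc0 : c 0 = fun _ => false) (hr0 : r 0 = fun _ => false)
    (hcdistinct : ∀ v : Fin n → Bool,
      (∃ j, colOf M j = v) ↔ ∃ i : Fin (m + 1), i ≠ 0 ∧ c i = v)
    (hrdistinct : ∀ v : Fin k → Bool,
      (∃ i, rowOf M i = v) ↔ ∃ i : Fin (m + 1), i ≠ 0 ∧ r i = v)
    (hcmono : ∀ i i' : Fin (m + 1), i < i' → weight (c i) < weight (c i'))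
    (hrmono : ∀ i i' : Fin (m + 1), i < i' → weight (r i) < weight (r i')) :
    ((∀ j, (univ.filter fun j' => colOf M j' = colOf M j).card ≤ d) ∧
        (∀ i, (univ.filter fun i' => rowOf M i' = rowOf M i).card ≤ d)) ↔
      ((∀ i : Fin m, weight (c i.succ) - weight (c i.castSucc) ≤ d) ∧
        (∀ i : Fin m, weight (r i.succ) - weight (r i.castSucc) ≤ d)) := by
  have key₁ := lonesum_key (d := d) M hM hnorowzero c r hc0 hr0 hcdistinct hrdistinct hcmono hrmono
  have hM' : Lonesum (fun (j : Fin k) (i : Fin n) => M i j) := by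
    intro a a' b b' ha hb
    have H := hM b b' a a' hb ha
    constructor
    · rintro ⟨h1, h2, h3, h4⟩
      exact H.1 ⟨h1, h3, h2, h4⟩
    · rintro ⟨h1, h2, h3, h4⟩
      exact H.2 ⟨h1, h3, h2, h4⟩
  have key₂ := lonesum_key (d := d) (fun (j : Fin k) (i : Fin n) => M i j) hM' hnocolzero r c
    hr0 hc0 hrdistinct hcdistinct hrmono hcmono
  constructor
  · rintro ⟨h1, h2⟩
    exact ⟨key₂.mp h2, key₁.mp h1⟩
  · rintro ⟨h1, h2⟩
    exact ⟨key₁.mpr h2, key₂.mpr h1⟩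
end

section
/- For all n ≥ 1, k ≥ 1 and d ≥ 1, the set L_{≤d}(n,k) is nonempty (equivalently pB(n,k)_{≤d} > 0) if and only if ⌈n/d⌉ ≤ k and k ≤ n·d. -/
open Finset

/-- `pB(n,k)_{≤d}`: the number of `n × k` lonesum 01 matrices with no all-zero
column and no all-zero row, in which every column vector occurs at most `d`
times among the columns and every row vector occurs at most `d` times among
the rows. -/
noncomputable def pB (n k d : ℕ) : ℕ :=
  Nat.card {M : Fin n → Fin k → Bool // Lonesum M ∧
    (∀ j, ∃ i, M i j = true) ∧ (∀ i, ∃ j, M i j = true) ∧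
    (∀ j, (univ.filter fun j' => colOf M j' = colOf M j).card ≤ d) ∧
    (∀ i, (univ.filter fun i' => rowOf M i' = rowOf M i).card ≤ d)}

/- ### Auxiliary lemmas -/

lemma rows_comparable {n k : ℕ} {M : Fin n → Fin k → Bool} (hL : Lonesum M) (i i' : Fin n) :
    (∀ j, M i j = true → M i' j = true) ∨ (∀ j, M i' j = true → M i j = true) := by
  by_contra h
  push_neg at h
  obtain ⟨⟨j1, h1, h1'⟩, ⟨j2, h2, h2'⟩⟩ := h
  simp only [Bool.not_eq_true] at h1' h2'
  rcases lt_trichotomy i i' with hii | hii | hii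
  · rcases lt_trichotomy j1 j2 with hjj | hjj | hjj
    · exact (hL i i' j1 j2 hii hjj).1 ⟨h1, h2', h1', h2⟩
    · rw [hjj] at h1; rw [h1] at h2'; exact absurd h2' (by simp)
    · exact (hL i i' j2 j1 hii hjj).2 ⟨h2', h1, h2, h1'⟩
  · rw [hii] at h1; rw [h1] at h1'; exact absurd h1' (by simp)
  · rcases lt_trichotomy j1 j2 with hjj | hjj | hjj
    · exact (hL i' i j1 j2 hii hjj).2 ⟨h1', h2, h1, h2'⟩
    · rw [hjj] at h1; rw [h1] at h2'; exact absurd h2' (by simp)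
    · exact (hL i' i j2 j1 hii hjj).1 ⟨h2, h1', h2', h1⟩

lemma lonesum_transpose {n k : ℕ} {M : Fin n → Fin k → Bool} (hL : Lonesum M) :
    Lonesum (fun j i => M i j) := by
  intro j j' i i' hjj hii
  constructor
  · rintro ⟨p1, p2, p3, p4⟩
    exact (hL i i' j j' hii hjj).1 ⟨p1, p3, p2, p4⟩
  · rintro ⟨p1, p2, p3, p4⟩
    exact (hL i i' j j' hii hjj).2 ⟨p1, p3, p2, p4⟩

lemma chain_bound {n k d : ℕ} (v : Fin n → Fin k → Bool)
    (hcomp : ∀ a b : Fin n,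
      (∀ j, v a j = true → v b j = true) ∨ (∀ j, v b j = true → v a j = true))
    (hnz : ∀ a, ∃ j, v a j = true)
    (hmul : ∀ a, (univ.filter fun b => v b = v a).card ≤ d) :
    n ≤ k * d := by
  classical
  set R := (univ : Finset (Fin n)).image v with hRdef
  have hR : R.card ≤ k := by
    have hmaps : ∀ r ∈ R,
        (univ.filter fun j => r j = true).card ∈ Finset.Icc 1 k := by
      intro r hr
      simp only [hRdef, mem_image, mem_univ, true_and] at hr
      obtain ⟨a, rfl⟩ := hr
      refine Finset.mem_Icc.mpr ⟨?_, ?_⟩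
      · obtain ⟨j, hj⟩ := hnz a
        exact Finset.card_pos.mpr ⟨j, by simp [hj]⟩
      · calc (univ.filter fun j => v a j = true).card ≤ (univ : Finset (Fin k)).card :=
              Finset.card_filter_le _ _
          _ = k := by simp
    have hinj : Set.InjOn
        (fun r : Fin k → Bool => (univ.filter fun j => r j = true).card) R := by
      intro r hr r' hr' hw
      simp only [hRdef, Finset.coe_image, Set.mem_image] at hr hr'
      obtain ⟨a, -, rfl⟩ := hr
      obtain ⟨b, -, rfl⟩ := hr'
      simp only at hw
      have key : ∀ x y : Fin n, (∀ j, v x j = true → v y j = true) →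
          (univ.filter fun j => v x j = true).card
            = (univ.filter fun j => v y j = true).card →
          v x = v y := by
        intro x y hsub hcard
        have hsub' : (univ.filter fun j => v x j = true)
            ⊆ (univ.filter fun j => v y j = true) := by
          intro j hj
          simp only [mem_filter, mem_univ, true_and] at hj ⊢
          exact hsub j hj
        have heq := Finset.eq_of_subset_of_card_le hsub' (le_of_eq hcard.symm)
        funext j
        have hjj := Finset.ext_iff.mp heq j
        simp only [mem_filter, mem_univ, true_and] at hjj
        cases hx : v x j <;> cases hy : v y j
        · rfl
        · rw [hx, hy] at hjj; exact absurd hjj.mpr (by simp)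
        · rw [hx, hy] at hjj; exact absurd hjj.mp (by simp)
        · rfl
      rcases hcomp a b with h | h
      · exact key a b h hw
      · exact (key b a h hw.symm).symm
    calc R.card ≤ (Finset.Icc 1 k).card :=
          Finset.card_le_card_of_injOn _ hmaps hinj
      _ = k := by simp
  have hcover : (univ : Finset (Fin n))
      ⊆ R.biUnion (fun r => univ.filter fun b => v b = r) := by
    intro a _
    simp only [mem_biUnion]
    exact ⟨v a, by simp [hRdef], by simp⟩
  have h1 : n ≤ (R.biUnion (fun r => univ.filter fun b => v b = r)).card := by
    have := Finset.card_le_card hcover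
    simpa using this
  have h2 : (R.biUnion (fun r => univ.filter fun b => v b = r)).card ≤
      ∑ r ∈ R, (univ.filter fun b => v b = r).card := Finset.card_biUnion_le
  have h3 : ∑ r ∈ R, (univ.filter fun b => v b = r).card ≤ R.card * d := by
    have := Finset.sum_le_card_nsmul R (fun r => (univ.filter fun b => v b = r).card) d ?_
    · simpa [smul_eq_mul] using this
    · intro r hr
      simp only [hRdef, mem_image, mem_univ, true_and] at hr
      obtain ⟨a, rfl⟩ := hr
      exact hmul a
  calc n ≤ R.card * d := le_trans h1 (le_trans h2 h3)
    _ ≤ k * d := Nat.mul_le_mul_right d hR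

lemma card_le_of_close {K d : ℕ} (s : Finset (Fin K))
    (h : ∀ x ∈ s, ∀ y ∈ s, x.val ≤ y.val → y.val < x.val + d) : s.card ≤ d := by
  rcases s.eq_empty_or_nonempty with h0 | hne
  · simp [h0]
  · obtain ⟨m, hm, hmin⟩ := s.exists_min_image Fin.val hne
    have hsub : s.image Fin.val ⊆ Finset.Ico m.val (m.val + d) := by
      intro x hx
      simp only [mem_image] at hx
      obtain ⟨y, hy, rfl⟩ := hx
      exact Finset.mem_Ico.mpr ⟨hmin y hy, h m hm y hy (hmin y hy)⟩
    calc s.card = (s.image Fin.val).card :=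
          (Finset.card_image_of_injective s Fin.val_injective).symm
      _ ≤ (Finset.Ico m.val (m.val + d)).card := Finset.card_le_card hsub
      _ = d := by simp

/-- For `n, k, d ≥ 1`, there exists a matrix in `L_{≤d}(n,k)` (equivalently
`pB(n,k)_{≤d} > 0`) iff `⌈n/d⌉ ≤ k ≤ n·d`. -/
theorem pB_pos_iff (n k d : ℕ) (hn : 1 ≤ n) (hk : 1 ≤ k) (hd : 1 ≤ d) :
    0 < pB n k d ↔ ((n + d - 1) / d ≤ k ∧ k ≤ n * d) := by
  have hdiv : (n + d - 1) / d ≤ k ↔ n ≤ k * d := by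
    rw [Nat.div_le_iff_le_mul_add_pred hd]
    have e : n + d - 1 = n + (d - 1) := by omega
    rw [e, Nat.add_le_add_iff_right, Nat.mul_comm]
  unfold pB
  rw [Nat.card_pos_iff]
  constructor
  · rintro ⟨⟨M, hL, hcol, hrow, hcmul, hrmul⟩, -⟩
    constructor
    · rw [hdiv]
      exact chain_bound (rowOf M) (fun a b => rows_comparable hL a b) hrow hrmul
    · exact chain_bound (colOf M)
        (fun a b => rows_comparable (lonesum_transpose hL) a b) hcol hcmul
  · rintro ⟨h1, h2⟩
    have hnk : n ≤ k * d := hdiv.mp h1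
    have hkn : k ≤ n * d := h2
    set Mc : Fin n → Fin k → Bool := fun i j => decide (j.val * n < (i.val + 1) * k) with hMc
    refine ⟨⟨⟨Mc, ?_, ?_, ?_, ?_, ?_⟩⟩, inferInstance⟩
    · -- Lonesum
      intro i i' j j' hii hjj
      have hle : (i.val + 1) * k ≤ (i'.val + 1) * k :=
        Nat.mul_le_mul_right k (by exact Nat.succ_le_succ (le_of_lt hii))
      constructor
      · rintro ⟨p1, p2, p3, p4⟩
        simp only [hMc, decide_eq_true_eq, decide_eq_false_iff_not] at p1 p3
        exact p3 (lt_of_lt_of_le p1 hle)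
      · rintro ⟨p1, p2, p3, p4⟩
        simp only [hMc, decide_eq_true_eq, decide_eq_false_iff_not] at p2 p4
        exact p4 (lt_of_lt_of_le p2 hle)
    · -- no zero column
      intro j
      refine ⟨⟨n - 1, by omega⟩, ?_⟩
      simp only [hMc, decide_eq_true_eq]
      have e : n - 1 + 1 = n := by omega
      rw [e]
      have hmm : (j.val + 1) * n ≤ k * n := Nat.mul_le_mul_right n j.isLt
      have e' : (j.val + 1) * n = j.val * n + n := by ring
      have e'' : k * n = n * k := by ring
      linarith
    · -- no zero row
      intro i
      refine ⟨⟨0, by omega⟩, ?_⟩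
      simp only [hMc, decide_eq_true_eq]
      have : 0 < (i.val + 1) * k := Nat.mul_pos (by omega) (by omega)
      simpa using this
    · -- column multiplicities
      have keyc : ∀ j1 j2 : Fin k, colOf Mc j1 = colOf Mc j2 →
          j1.val * n ≤ j2.val * n → j2.val * n < j1.val * n + k := by
        intro j1 j2 hcc hle
        obtain ⟨q, r, hq, hr⟩ : ∃ q r, k * q + r = j1.val * n ∧ r < k :=
          ⟨j1.val * n / k, j1.val * n % k,
            Nat.div_add_mod _ _, Nat.mod_lt _ (by omega)⟩
        have e1 : (q + 1) * k = k * q + k := by ring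
        have hqn : q < n := by
          have hmm : (j1.val + 1) * n ≤ k * n := Nat.mul_le_mul_right n j1.isLt
          have e' : (j1.val + 1) * n = j1.val * n + n := by ring
          by_contra hc
          push_neg at hc
          have hkk : k * n ≤ k * q := Nat.mul_le_mul_left k hc
          linarith
        have hM1 : Mc ⟨q, hqn⟩ j1 = true := by
          simp only [hMc, decide_eq_true_eq]
          show j1.val * n < (q + 1) * k
          linarith
        have hcf := congrFun hcc ⟨q, hqn⟩
        simp only [colOf] at hcf
        rw [hM1] at hcf
        have hM2 : j2.val * n < (q + 1) * k := by
          have hcf' := hcf.symm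
          simp only [hMc, decide_eq_true_eq] at hcf'
          exact hcf'
        linarith
      intro j
      apply card_le_of_close
      intro x hx y hy hxy
      simp only [mem_filter] at hx hy
      have hcc : colOf Mc x = colOf Mc y := hx.2.trans hy.2.symm
      have h1' : x.val * n ≤ y.val * n := Nat.mul_le_mul_right n hxy
      have h2' : y.val * n < x.val * n + k := keyc x y hcc h1'
      by_contra hc
      push_neg at hc
      have h3 : (x.val + d) * n ≤ y.val * n := Nat.mul_le_mul_right n hc
      have h4 : (x.val + d) * n = x.val * n + d * n := by ring
      have h6 : n * d = d * n := by ring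
      linarith
    · -- row multiplicities
      have keyr : ∀ i1 i2 : Fin n, rowOf Mc i1 = rowOf Mc i2 →
          i1.val ≤ i2.val → i2.val * k < i1.val * k + n := by
        intro i1 i2 hrr hle
        by_contra hc
        push_neg at hc
        obtain ⟨q, r, hq, hr⟩ :
            ∃ q r, n * q + r = (i1.val + 1) * k + n - 1 ∧ r < n :=
          ⟨((i1.val + 1) * k + n - 1) / n, ((i1.val + 1) * k + n - 1) % n,
            Nat.div_add_mod _ _, Nat.mod_lt _ (by omega)⟩
        have ea : (i1.val + 1) * k = i1.val * k + k := by ring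
        have e2 : (i2.val + 1) * k = i2.val * k + k := by ring
        have hcc : (i1.val + 1) * k + n - 1 + 1 = (i1.val + 1) * k + n := by omega
        have hi2 : (i1.val + 1) * k + n ≤ (i2.val + 1) * k := by
          rw [ea, e2]; omega
        have hqk : q < k := by
          have hnk' : (i2.val + 1) * k ≤ n * k := Nat.mul_le_mul_right k i2.isLt
          by_contra hck
          push_neg at hck
          have hkk : n * k ≤ n * q := Nat.mul_le_mul_left n hck
          omega
        have e3 : q * n = n * q := by ring
        have hM1 : Mc i1 ⟨q, hqk⟩ = false := by
          simp only [hMc, decide_eq_false_iff_not]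
          show ¬ q * n < (i1.val + 1) * k
          omega
        have hM2 : Mc i2 ⟨q, hqk⟩ = true := by
          simp only [hMc, decide_eq_true_eq]
          show q * n < (i2.val + 1) * k
          omega
        have hcf := congrFun hrr ⟨q, hqk⟩
        simp only [rowOf] at hcf
        rw [hM1, hM2] at hcf
        exact absurd hcf (by simp)
      intro i
      apply card_le_of_close
      intro x hx y hy hxy
      simp only [mem_filter] at hx hy
      have hrr : rowOf Mc x = rowOf Mc y := hx.2.trans hy.2.symm
      have h2' : y.val * k < x.val * k + n := keyr x y hrr hxy
      by_contra hc
      push_neg at hc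
      have h3 : (x.val + d) * k ≤ y.val * k := Nat.mul_le_mul_right k hc
      have h4 : (x.val + d) * k = x.val * k + d * k := by ring
      have h6 : k * d = d * k := by ring
      linarith
end

section
/- For d = 1: the number of n×n lonesum 01 matrices with no all-zero column and no all-zero row in which all n columns are pairwise distinct and all n rows are pairwise distinct equals (n!)². Moreover, for n ≠ k there is no such n×k matrix, i.e., pB(n,k)_{≤1} = (n!)² if n = k and pB(n,k)_{≤1} = 0 otherwise. -/
open Finset

namespace PBaux

variable {n k : ℕ}

/-- column support size -/
def ccount (M : Fin n → Fin k → Bool) (j : Fin k) : ℕ :=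
  (univ.filter fun i => M i j = true).card

/-- row support size -/
def rcount (M : Fin n → Fin k → Bool) (i : Fin n) : ℕ :=
  (univ.filter fun j => M i j = true).card

lemma cols_comp {M : Fin n → Fin k → Bool} (hL : Lonesum M) (j j' : Fin k) :
    (∀ i, M i j = true → M i j' = true) ∨ (∀ i, M i j' = true → M i j = true) := by
  by_contra h
  push_neg at h
  obtain ⟨⟨i, hi1, hi2⟩, i', hi'1, hi'2⟩ := h
  simp only [Bool.not_eq_true] at hi2 hi'2
  rcases lt_trichotomy i i' with hii | hii | hii
  · rcases lt_trichotomy j j' with hjj | hjj | hjj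
    · exact (hL i i' j j' hii hjj).1 ⟨hi1, hi2, hi'2, hi'1⟩
    · simp_all
    · exact (hL i i' j' j hii hjj).2 ⟨hi2, hi1, hi'1, hi'2⟩
  · simp_all
  · rcases lt_trichotomy j j' with hjj | hjj | hjj
    · exact (hL i' i j j' hii hjj).2 ⟨hi'2, hi'1, hi1, hi2⟩
    · simp_all
    · exact (hL i' i j' j hii hjj).1 ⟨hi'1, hi'2, hi2, hi1⟩

lemma rows_comp {M : Fin n → Fin k → Bool} (hL : Lonesum M) (i i' : Fin n) :
    (∀ j, M i j = true → M i' j = true) ∨ (∀ j, M i' j = true → M i j = true) := by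
  by_contra h
  push_neg at h
  obtain ⟨⟨j, hj1, hj2⟩, j', hj'1, hj'2⟩ := h
  simp only [Bool.not_eq_true] at hj2 hj'2
  rcases lt_trichotomy i i' with hii | hii | hii
  · rcases lt_trichotomy j j' with hjj | hjj | hjj
    · exact (hL i i' j j' hii hjj).1 ⟨hj1, hj'2, hj2, hj'1⟩
    · simp_all
    · exact (hL i i' j' j hii hjj).2 ⟨hj'2, hj1, hj'1, hj2⟩
  · simp_all
  · rcases lt_trichotomy j j' with hjj | hjj | hjj
    · exact (hL i' i j j' hii hjj).2 ⟨hj2, hj'1, hj1, hj'2⟩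
    · simp_all
    · exact (hL i' i j' j hii hjj).1 ⟨hj'1, hj2, hj'2, hj1⟩

/-- columns with pointwise implication and reverse card inequality are equal -/
lemma col_eq_of_le_of_card_le {M : Fin n → Fin k → Bool} {j j' : Fin k}
    (h : ∀ i, M i j = true → M i j' = true)
    (hc : ccount M j' ≤ ccount M j) : colOf M j = colOf M j' := by
  have hsub : (univ.filter fun i => M i j = true) ⊆ (univ.filter fun i => M i j' = true) := by
    intro i hi
    simp only [mem_filter, mem_univ, true_and] at hi ⊢
    exact h i hi
  have heq := Finset.eq_of_subset_of_card_le hsub hc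
  funext i
  have := Finset.ext_iff.mp heq i
  simp only [mem_filter, mem_univ, true_and] at this
  show M i j = M i j'
  cases h1 : M i j <;> cases h2 : M i j' <;> simp_all

lemma row_eq_of_le_of_card_le {M : Fin n → Fin k → Bool} {i i' : Fin n}
    (h : ∀ j, M i j = true → M i' j = true)
    (hc : rcount M i' ≤ rcount M i) : rowOf M i = rowOf M i' := by
  have hsub : (univ.filter fun j => M i j = true) ⊆ (univ.filter fun j => M i' j = true) := by
    intro j hj
    simp only [mem_filter, mem_univ, true_and] at hj ⊢
    exact h j hj
  have heq := Finset.eq_of_subset_of_card_le hsub hc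
  funext j
  have := Finset.ext_iff.mp heq j
  simp only [mem_filter, mem_univ, true_and] at this
  show M i j = M i' j
  cases h1 : M i j <;> cases h2 : M i' j <;> simp_all

lemma ccount_le_of_le {M : Fin n → Fin k → Bool} {j j' : Fin k}
    (h : ∀ i, M i j = true → M i j' = true) : ccount M j ≤ ccount M j' := by
  apply Finset.card_le_card
  intro i hi
  simp only [mem_filter, mem_univ, true_and] at hi ⊢
  exact h i hi

lemma rcount_le_of_le {M : Fin n → Fin k → Bool} {i i' : Fin n}
    (h : ∀ j, M i j = true → M i' j = true) : rcount M i ≤ rcount M i' := by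
  apply Finset.card_le_card
  intro j hj
  simp only [mem_filter, mem_univ, true_and] at hj ⊢
  exact h j hj

lemma colOf_inj {M : Fin n → Fin k → Bool}
    (hc : ∀ j, (univ.filter fun j' => colOf M j' = colOf M j).card ≤ 1) :
    Function.Injective (colOf M) := by
  intro j j' h
  by_contra hne
  have hsub : ({j, j'} : Finset (Fin k)) ⊆ univ.filter fun a => colOf M a = colOf M j' := by
    intro a ha
    simp only [mem_insert, mem_singleton] at ha
    rcases ha with rfl | rfl <;> simp [h]
  have h2 : ({j, j'} : Finset (Fin k)).card = 2 := Finset.card_pair hne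
  have := Finset.card_le_card hsub
  have := hc j'
  omega

lemma rowOf_inj {M : Fin n → Fin k → Bool}
    (hr : ∀ i, (univ.filter fun i' => rowOf M i' = rowOf M i).card ≤ 1) :
    Function.Injective (rowOf M) := by
  intro i i' h
  by_contra hne
  have hsub : ({i, i'} : Finset (Fin n)) ⊆ univ.filter fun a => rowOf M a = rowOf M i' := by
    intro a ha
    simp only [mem_insert, mem_singleton] at ha
    rcases ha with rfl | rfl <;> simp [h]
  have h2 : ({i, i'} : Finset (Fin n)).card = 2 := Finset.card_pair hne
  have := Finset.card_le_card hsub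
  have := hr i'
  omega

lemma ccount_inj {M : Fin n → Fin k → Bool} (hL : Lonesum M)
    (hc : ∀ j, (univ.filter fun j' => colOf M j' = colOf M j).card ≤ 1) :
    Function.Injective (ccount M) := by
  intro j j' h
  apply colOf_inj hc
  rcases cols_comp hL j j' with hcc | hcc
  · exact col_eq_of_le_of_card_le hcc h.ge
  · exact (col_eq_of_le_of_card_le hcc h.le).symm

lemma rcount_inj {M : Fin n → Fin k → Bool} (hL : Lonesum M)
    (hr : ∀ i, (univ.filter fun i' => rowOf M i' = rowOf M i).card ≤ 1) :
    Function.Injective (rcount M) := by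
  intro i i' h
  apply rowOf_inj hr
  rcases rows_comp hL i i' with hcc | hcc
  · exact row_eq_of_le_of_card_le hcc h.ge
  · exact (row_eq_of_le_of_card_le hcc h.le).symm

lemma one_le_ccount {M : Fin n → Fin k → Bool} (h0 : ∀ j, ∃ i, M i j = true) (j : Fin k) :
    1 ≤ ccount M j := by
  rw [ccount]
  rw [Nat.one_le_iff_ne_zero, ← Nat.pos_iff_ne_zero, Finset.card_pos]
  obtain ⟨i, hi⟩ := h0 j
  exact ⟨i, by simp [hi]⟩

lemma one_le_rcount {M : Fin n → Fin k → Bool} (h0 : ∀ i, ∃ j, M i j = true) (i : Fin n) :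
    1 ≤ rcount M i := by
  rw [rcount]
  rw [Nat.one_le_iff_ne_zero, ← Nat.pos_iff_ne_zero, Finset.card_pos]
  obtain ⟨j, hj⟩ := h0 i
  exact ⟨j, by simp [hj]⟩

lemma ccount_le {M : Fin n → Fin k → Bool} (j : Fin k) : ccount M j ≤ n := by
  have := Finset.card_filter_le (univ : Finset (Fin n)) (fun i => M i j = true)
  simpa [ccount] using this

lemma rcount_le {M : Fin n → Fin k → Bool} (i : Fin n) : rcount M i ≤ k := by
  have := Finset.card_filter_le (univ : Finset (Fin k)) (fun j => M i j = true)
  simpa [rcount] using this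

/-- an injective function from `Fin m` into `[1,N]` forces `m ≤ N`. -/
lemma card_le_of_inj_bounded {m N : ℕ} (f : Fin m → ℕ) (hinj : Function.Injective f)
    (hlb : ∀ j, 1 ≤ f j) (hub : ∀ j, f j ≤ N) : m ≤ N := by
  have h := Finset.card_le_card_of_injOn (s := univ) (t := Finset.Icc 1 N) f
    (fun j _ => Finset.mem_Icc.mpr ⟨hlb j, hub j⟩) (hinj.injOn)
  simpa [Nat.card_Icc] using h

end PBaux

namespace PBaux

variable {n k : ℕ}

lemma filter_lt_card_le {m : ℕ} {f : Fin m → ℕ} (hinj : Function.Injective f)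
    (hlb : ∀ j, 1 ≤ f j) (j : Fin m) :
    (univ.filter fun j' => f j' < f j).card ≤ f j - 1 := by
  have h := Finset.card_le_card_of_injOn (s := univ.filter fun j' => f j' < f j)
    (t := Finset.Icc 1 (f j - 1)) f
    (fun j' hj' => by
      simp only [mem_coe, mem_filter, mem_univ, true_and] at hj'
      exact Finset.mem_Icc.mpr ⟨hlb j', by omega⟩)
    (hinj.injOn)
  simpa [Nat.card_Icc] using h

lemma filter_gt_card_le {m N : ℕ} {f : Fin m → ℕ} (hinj : Function.Injective f)
    (hub : ∀ j, f j ≤ N) (j : Fin m) :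
    (univ.filter fun j' => f j < f j').card ≤ N - f j := by
  have h := Finset.card_le_card_of_injOn (s := univ.filter fun j' => f j < f j')
    (t := Finset.Icc (f j + 1) N) f
    (fun j' hj' => by
      simp only [mem_coe, mem_filter, mem_univ, true_and] at hj'
      exact Finset.mem_Icc.mpr ⟨by omega, hub j'⟩)
    (hinj.injOn)
  simpa [Nat.card_Icc] using h

lemma key_true {M : Fin n → Fin k → Bool} (hL : Lonesum M)
    (hc0 : ∀ j, ∃ i, M i j = true)
    (hcd : ∀ j, (univ.filter fun j' => colOf M j' = colOf M j).card ≤ 1)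
    {i : Fin n} {j : Fin k} (hij : M i j = true) :
    k + 1 ≤ rcount M i + ccount M j := by
  have hcinj := ccount_inj hL hcd
  have hTsub : (univ.filter fun j' => ccount M j ≤ ccount M j')
      ⊆ (univ.filter fun j' => M i j' = true) := by
    intro j' hj'
    simp only [mem_filter, mem_univ, true_and] at hj' ⊢
    rcases cols_comp hL j j' with h | h
    · exact h i hij
    · have hcol : colOf M j' = colOf M j := col_eq_of_le_of_card_le h hj'
      have := congrFun hcol i
      simp only [colOf] at this
      rw [this]; exact hij
  have h1 := Finset.card_le_card hTsub
  have h2 := Finset.card_filter_add_card_filter_not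
    (s := (univ : Finset (Fin k))) (p := fun j' => ccount M j ≤ ccount M j')
  have h3 : (univ.filter fun j' => ¬ ccount M j ≤ ccount M j').card
      = (univ.filter fun j' => ccount M j' < ccount M j).card := by
    refine congrArg Finset.card ?_
    ext j'
    simp only [mem_filter, mem_univ, true_and, not_le]
  have h4 := filter_lt_card_le hcinj (one_le_ccount hc0) j
  have h5 : (univ.filter fun j' => M i j' = true).card = rcount M i := rfl
  have h6 : (univ : Finset (Fin k)).card = k := by simp
  have h7 := one_le_ccount hc0 j
  omega

lemma key_false {M : Fin n → Fin k → Bool} (hL : Lonesum M)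
    (hcd : ∀ j, (univ.filter fun j' => colOf M j' = colOf M j).card ≤ 1)
    {i : Fin n} {j : Fin k} (hij : M i j = false) :
    rcount M i + ccount M j ≤ n := by
  have hcinj := ccount_inj hL hcd
  have hTsub : (univ.filter fun j' => ccount M j' ≤ ccount M j)
      ⊆ (univ.filter fun j' => M i j' = false) := by
    intro j' hj'
    simp only [mem_filter, mem_univ, true_and] at hj' ⊢
    rcases cols_comp hL j' j with h | h
    · cases hmij' : M i j' with
      | false => rfl
      | true => rw [h i hmij'] at hij; exact absurd hij (by simp)
    · have hcol : colOf M j = colOf M j' := col_eq_of_le_of_card_le h hj'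
      have := congrFun hcol i
      simp only [colOf] at this
      rw [← this]; exact hij
  have h1 := Finset.card_le_card hTsub
  have h2 := Finset.card_filter_add_card_filter_not
    (s := (univ : Finset (Fin k))) (p := fun j' => ccount M j' ≤ ccount M j)
  have h3 : (univ.filter fun j' => ¬ ccount M j' ≤ ccount M j).card
      = (univ.filter fun j' => ccount M j < ccount M j').card := by
    refine congrArg Finset.card ?_
    ext j'
    simp only [mem_filter, mem_univ, true_and, not_le]
  have h4 := filter_gt_card_le hcinj (ccount_le (M := M)) j
  have h5 : (univ.filter fun j' => M i j' = true).card = rcount M i := rfl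
  have h6 : (univ : Finset (Fin k)).card = k := by simp
  have h7 := ccount_le (M := M) j
  have h8 := Finset.card_filter_add_card_filter_not
    (s := (univ : Finset (Fin k))) (p := fun j' => M i j' = true)
  have h9 : (univ.filter fun j' => ¬ M i j' = true).card
      = (univ.filter fun j' => M i j' = false).card := by
    congr 1
    ext j'
    simp
  omega

/-- the key characterization, for square matrices -/
lemma key {M : Fin n → Fin n → Bool} (hL : Lonesum M)
    (hc0 : ∀ j, ∃ i, M i j = true)
    (hcd : ∀ j, (univ.filter fun j' => colOf M j' = colOf M j).card ≤ 1)
    (i : Fin n) (j : Fin n) :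
    M i j = true ↔ n + 1 ≤ rcount M i + ccount M j := by
  constructor
  · exact key_true hL hc0 hcd
  · intro h
    cases hij : M i j with
    | true => rfl
    | false =>
      have := key_false hL hcd hij
      omega

end PBaux

namespace PBaux

variable {n : ℕ}

/-- the standard doubly-distinct lonesum matrix attached to a pair of permutations -/
def stdM (ρ σ : Equiv.Perm (Fin n)) : Fin n → Fin n → Bool :=
  fun i j => decide (ρ i ≤ σ j)

lemma stdM_eq_true {ρ σ : Equiv.Perm (Fin n)} {i j : Fin n} :
    stdM ρ σ i j = true ↔ ρ i ≤ σ j := by simp [stdM]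

lemma stdM_eq_false {ρ σ : Equiv.Perm (Fin n)} {i j : Fin n} :
    stdM ρ σ i j = false ↔ σ j < ρ i := by simp [stdM]

lemma stdM_lonesum (ρ σ : Equiv.Perm (Fin n)) : Lonesum (stdM ρ σ) := by
  intro i i' j j' _ _
  constructor
  · rintro ⟨a, b, c, d⟩
    rw [stdM_eq_true] at a d
    rw [stdM_eq_false] at b c
    have := a.trans_lt c
    have := d.trans_lt b
    exact absurd (this.trans (a.trans_lt c)) (lt_irrefl _)
  · rintro ⟨a, b, c, d⟩
    rw [stdM_eq_true] at b c
    rw [stdM_eq_false] at a d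
    have := b.trans_lt d
    exact absurd (this.trans (c.trans_lt a)) (lt_irrefl _)

lemma stdM_col_ne (ρ σ : Equiv.Perm (Fin n)) (j : Fin n) : ∃ i, stdM ρ σ i j = true := by
  have hn : 0 < n := j.pos
  refine ⟨ρ.symm ⟨0, hn⟩, ?_⟩
  rw [stdM_eq_true, Equiv.apply_symm_apply]
  exact Fin.mk_le_of_le_val (Nat.zero_le _)

lemma stdM_row_ne (ρ σ : Equiv.Perm (Fin n)) (i : Fin n) : ∃ j, stdM ρ σ i j = true := by
  have hn : 0 < n := i.pos
  refine ⟨σ.symm ⟨n - 1, by omega⟩, ?_⟩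
  rw [stdM_eq_true, Equiv.apply_symm_apply, Fin.le_def]
  show (ρ i : ℕ) ≤ n - 1
  have := (ρ i).isLt
  omega

lemma stdM_colOf_inj (ρ σ : Equiv.Perm (Fin n)) :
    Function.Injective (colOf (stdM ρ σ)) := by
  intro j j' h
  have h1 := congrFun h (ρ.symm (σ j'))
  have h2 := congrFun h (ρ.symm (σ j))
  simp only [colOf, stdM, Equiv.apply_symm_apply, decide_eq_decide] at h1 h2
  have ha : σ j' ≤ σ j := h1.mpr le_rfl
  have hb : σ j ≤ σ j' := h2.mp le_rfl
  exact σ.injective (le_antisymm hb ha)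

lemma stdM_rowOf_inj (ρ σ : Equiv.Perm (Fin n)) :
    Function.Injective (rowOf (stdM ρ σ)) := by
  intro i i' h
  have h1 := congrFun h (σ.symm (ρ i))
  have h2 := congrFun h (σ.symm (ρ i'))
  simp only [rowOf, stdM, Equiv.apply_symm_apply, decide_eq_decide] at h1 h2
  have ha : ρ i' ≤ ρ i := h1.mp le_rfl
  have hb : ρ i ≤ ρ i' := h2.mpr le_rfl
  exact ρ.injective (le_antisymm hb ha)

lemma filter_card_le_one_of_inj {α β : Type*} [Fintype α] [DecidableEq β]
    {f : α → β} (hf : Function.Injective f) (a : α) :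
    (univ.filter fun a' => f a' = f a).card ≤ 1 := by
  have : (univ.filter fun a' => f a' = f a) ⊆ {a} := by
    intro a' ha'
    simp only [mem_filter, mem_univ, true_and] at ha'
    simp [hf ha']
  simpa using Finset.card_le_card this

/-- counting through a permutation -/
lemma card_filter_perm {e : Equiv.Perm (Fin n)} (p : Fin n → Prop) [DecidablePred p] :
    (univ.filter fun i => p (e i)).card = (univ.filter p).card := by
  apply Finset.card_bij' (fun a _ => e a) (fun b _ => e.symm b) <;> simp

lemma stdM_ccount (ρ σ : Equiv.Perm (Fin n)) (j : Fin n) :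
    ccount (stdM ρ σ) j = (σ j : ℕ) + 1 := by
  have h1 : ccount (stdM ρ σ) j = (univ.filter fun i => ρ i ≤ σ j).card := by
    unfold ccount
    congr 1
    ext i
    simp [stdM]
  rw [h1, card_filter_perm (fun v => v ≤ σ j)]
  have : (univ.filter fun v => v ≤ σ j) = Finset.Iic (σ j) := by
    ext v; simp
  rw [this, Fin.card_Iic]

lemma stdM_rcount (ρ σ : Equiv.Perm (Fin n)) (i : Fin n) :
    rcount (stdM ρ σ) i = n - (ρ i : ℕ) := by
  have h1 : rcount (stdM ρ σ) i = (univ.filter fun j => ρ i ≤ σ j).card := by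
    unfold rcount
    congr 1
    ext j
    simp [stdM]
  rw [h1, card_filter_perm (fun v => ρ i ≤ v)]
  have : (univ.filter fun v => ρ i ≤ v) = Finset.Ici (ρ i) := by
    ext v; simp
  rw [this, Fin.card_Ici]

end PBaux

namespace PBaux

variable {n k : ℕ}

lemma bool_eq_of_iff {a b : Bool} (h : (a = true) ↔ (b = true)) : a = b := by
  cases a <;> cases b <;> simp_all

/-- the conditions in the definition of `pB · · 1` -/
def Cond (M : Fin n → Fin k → Bool) : Prop :=
  Lonesum M ∧ (∀ j, ∃ i, M i j = true) ∧ (∀ i, ∃ j, M i j = true) ∧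
    (∀ j, (univ.filter fun j' => colOf M j' = colOf M j).card ≤ 1) ∧
    (∀ i, (univ.filter fun i' => rowOf M i' = rowOf M i).card ≤ 1)

lemma stdM_cond (ρ σ : Equiv.Perm (Fin n)) : Cond (stdM ρ σ) :=
  ⟨stdM_lonesum ρ σ, stdM_col_ne ρ σ, stdM_row_ne ρ σ,
    fun j => filter_card_le_one_of_inj (stdM_colOf_inj ρ σ) j,
    fun i => filter_card_le_one_of_inj (stdM_rowOf_inj ρ σ) i⟩

/-- the pair-of-permutations parametrization -/
def g (p : Equiv.Perm (Fin n) × Equiv.Perm (Fin n)) : {M : Fin n → Fin n → Bool // Cond M} :=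
  ⟨stdM p.1 p.2, stdM_cond p.1 p.2⟩

lemma g_bijective : Function.Bijective (g (n := n)) := by
  constructor
  · rintro ⟨ρ, σ⟩ ⟨ρ', σ'⟩ h
    have hM : stdM ρ σ = stdM ρ' σ' := congrArg Subtype.val h
    have hσ : σ = σ' := by
      ext j
      have h1 : ccount (stdM ρ σ) j = ccount (stdM ρ' σ') j := by rw [hM]
      rw [stdM_ccount, stdM_ccount] at h1
      omega
    have hρ : ρ = ρ' := by
      ext i
      have h1 : rcount (stdM ρ σ) i = rcount (stdM ρ' σ') i := by rw [hM]
      rw [stdM_rcount, stdM_rcount] at h1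
      have h2 := (ρ i).isLt
      have h3 := (ρ' i).isLt
      omega
    rw [Prod.ext_iff]
    exact ⟨hρ, hσ⟩
  · rintro ⟨M, hL, hc0, hr0, hcd, hrd⟩
    have hρinj : Function.Injective (fun i : Fin n =>
        (⟨n - rcount M i, by have := one_le_rcount hr0 i; have := i.pos; omega⟩ : Fin n)) := by
      intro i i' h
      have h1 : n - rcount M i = n - rcount M i' := congrArg Fin.val h
      have h2 := rcount_le (M := M) i
      have h3 := rcount_le (M := M) i'
      have h4 := one_le_rcount hr0 i
      have h5 := one_le_rcount hr0 i'
      exact rcount_inj hL hrd (by omega)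
    have hσinj : Function.Injective (fun j : Fin n =>
        (⟨ccount M j - 1, by
          have := one_le_ccount hc0 j; have := ccount_le (M := M) j; have := j.pos
          omega⟩ : Fin n)) := by
      intro j j' h
      have h1 : ccount M j - 1 = ccount M j' - 1 := congrArg Fin.val h
      have h4 := one_le_ccount hc0 j
      have h5 := one_le_ccount hc0 j'
      exact ccount_inj hL hcd (by omega)
    refine ⟨(Equiv.ofBijective _ ((Finite.injective_iff_bijective).mp hρinj),
       Equiv.ofBijective _ ((Finite.injective_iff_bijective).mp hσinj)), ?_⟩
    apply Subtype.ext
    show stdM _ _ = M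
    funext i j
    apply bool_eq_of_iff
    rw [stdM_eq_true]
    show (⟨n - rcount M i, _⟩ : Fin n) ≤ (⟨ccount M j - 1, _⟩ : Fin n) ↔ _
    rw [Fin.le_def, key hL hc0 hcd i j]
    show n - rcount M i ≤ ccount M j - 1 ↔ _
    have h2 := rcount_le (M := M) i
    have h4 := one_le_rcount hr0 i
    have h5 := one_le_ccount hc0 j
    have h6 := ccount_le (M := M) j
    omega

lemma cond_empty (hnk : n ≠ k) : IsEmpty {M : Fin n → Fin k → Bool // Cond M} := by
  constructor
  rintro ⟨M, hL, hc0, hr0, hcd, hrd⟩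
  have h1 : k ≤ n := card_le_of_inj_bounded (ccount M) (ccount_inj hL hcd)
    (one_le_ccount hc0) (ccount_le (M := M))
  have h2 : n ≤ k := card_le_of_inj_bounded (rcount M) (rcount_inj hL hrd)
    (one_le_rcount hr0) (rcount_le (M := M))
  omega

end PBaux


/-- For `d = 1`: `pB(n,n)_{≤1} = (n!)²`, and `pB(n,k)_{≤1} = 0` for `n ≠ k`. -/
theorem pB_d_eq_one (n k : ℕ) :
    pB n k 1 = if n = k then n.factorial ^ 2 else 0 := by
  have hpB : pB n k 1 = Nat.card {M : Fin n → Fin k → Bool // PBaux.Cond M} := rfl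
  rw [hpB]
  split_ifs with h
  · subst h
    rw [← Nat.card_eq_of_bijective _ (PBaux.g_bijective (n := n))]
    simp [Nat.card_eq_fintype_card, Fintype.card_perm, sq]
  · have := PBaux.cond_empty h
    simp
end

section
/- For all natural numbers n and k, the following integer identity holds: ∑_{m=0}^{min(n,k)} m! · S(n+1, m+1) · m! · S(k+1, m+1) = (−1)^n · ∑_{m=0}^{n} (−1)^m · m! · S(n,m) · (m+1)^k. -/
open Finset

def surjCount : ℕ → ℕ → ℕ
  | 0, 0 => 1
  | 0, _ + 1 => 0
  | _ + 1, 0 => 0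
  | n + 1, m + 1 => (m + 1) * (surjCount n (m + 1) + surjCount n m)

def fA (n m : ℕ) : ℕ := surjCount n (m + 1) + surjCount n m

lemma surjCount_eq_zero : ∀ n m, n < m → surjCount n m = 0
  | 0, _ + 1, _ => rfl
  | n + 1, m + 1, h => by
    have h1 : surjCount n (m + 1) = 0 := surjCount_eq_zero n (m + 1) (by omega)
    have h2 : surjCount n m = 0 := surjCount_eq_zero n m (by omega)
    simp [surjCount, h1, h2]

lemma fA_eq_zero {n m : ℕ} (h : n < m) : fA n m = 0 := by
  simp [fA, surjCount_eq_zero n (m+1) (by omega), surjCount_eq_zero n m h]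

lemma surjCount_succ_succ (n m : ℕ) :
    surjCount (n + 1) (m + 1) = (m + 1) * fA n m := rfl

lemma fA_succ (n m : ℕ) :
    fA (n + 1) m = (m + 1) * fA n m + m * fA n (m - 1) := by
  cases m with
  | zero =>
    show surjCount (n+1) 1 + surjCount (n+1) 0 = _
    rw [surjCount_succ_succ]
    simp [surjCount]
  | succ m =>
    show surjCount (n+1) (m+2) + surjCount (n+1) (m+1) = _
    rw [surjCount_succ_succ, surjCount_succ_succ]
    simp only [Nat.add_sub_cancel]
    try ring

lemma fA_zero_right (n : ℕ) : fA n 0 = 1 := by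
  induction n with
  | zero => rfl
  | succ n ih => rw [fA_succ]; simpa using ih

lemma fA_zero_left (m : ℕ) : fA 0 (m + 1) = 0 := fA_eq_zero (Nat.succ_pos m)

lemma choose_aux (t j : ℕ) :
    (t+1) * (t+1).choose j = (j+1) * t.choose j + j * t.choose (j-1) + t * t.choose j := by
  cases j with
  | zero => simp; ring
  | succ s =>
    have h1 : (t+1) * t.choose s = (t+1).choose (s+1) * (s+1) := Nat.add_one_mul_choose_eq t s
    have h2 : (t+1).choose (s+1) = t.choose s + t.choose (s+1) := Nat.choose_succ_succ' t s
    simp only [Nat.add_sub_cancel]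
    calc (t+1) * (t+1).choose (s+1)
        = (t+1) * t.choose s + (t+1) * t.choose (s+1) := by rw [h2, Nat.mul_add]
      _ = (t.choose s + t.choose (s+1)) * (s+1) + (t+1) * t.choose (s+1) := by rw [h1, h2]
      _ = _ := by ring

lemma reindex_aux (m : ℕ) (F : ℕ → ℤ) :
    ∑ j ∈ range (m+1), (j:ℤ) * (m.choose j : ℤ) * F (j-1)
      = ∑ j ∈ range (m+1), ((j:ℤ)+1) * (m.choose (j+1) : ℤ) * F j := by
  rw [Finset.sum_range_succ' (fun j => (j:ℤ) * (m.choose j : ℤ) * F (j-1)) m]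
  rw [Finset.sum_range_succ (fun j => ((j:ℤ)+1) * (m.choose (j+1):ℤ) * F j) m]
  simp [Nat.choose_succ_self]

lemma pow_eq_sum (k m : ℕ) :
    ((m:ℤ)+1)^k = ∑ j ∈ range (m+1), (m.choose j : ℤ) * fA k j := by
  induction k generalizing m with
  | zero =>
    rw [Finset.sum_eq_single_of_mem 0 (Finset.mem_range.2 (Nat.succ_pos m))]
    · simp [fA_zero_right]
    · rintro ⟨⟩ _ hb
      · exact absurd rfl hb
      · simp [fA_zero_left]
  | succ k ih =>
    have step : ∀ j : ℕ, (fA (k+1) j : ℤ) = (j+1) * fA k j + j * fA k (j-1) := by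
      intro j; rw [fA_succ]; push_cast; ring
    calc ((m:ℤ)+1)^(k+1) = ((m:ℤ)+1) * ((m:ℤ)+1)^k := by ring
    _ = ∑ j ∈ range (m+1), ((m:ℤ)+1) * (m.choose j : ℤ) * fA k j := by
        rw [ih m, Finset.mul_sum]; simp [mul_assoc]
    _ = ∑ j ∈ range (m+1), ((j:ℤ)+1) * (m.choose j : ℤ) * fA k j
          + ∑ j ∈ range (m+1), ((j:ℤ)+1) * (m.choose (j+1) : ℤ) * fA k j := by
        rw [← Finset.sum_add_distrib]
        refine Finset.sum_congr rfl fun j hj => ?_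
        have h1 : (m+1) * m.choose j = (m+1).choose (j+1) * (j+1) := Nat.add_one_mul_choose_eq m j
        have h1' : ((m:ℤ)+1) * (m.choose j : ℤ) = ((m+1).choose (j+1) : ℤ) * ((j:ℤ)+1) := by
          exact_mod_cast h1
        have h2' : (((m+1).choose (j+1) : ℕ) : ℤ) = (m.choose j : ℤ) + (m.choose (j+1) : ℤ) := by
          exact_mod_cast Nat.choose_succ_succ' m j
        rw [h1', h2']; ring
    _ = ∑ j ∈ range (m+1), (m.choose j : ℤ) * fA (k+1) j := by
        rw [← reindex_aux m (fun t => (fA k t : ℤ)), ← Finset.sum_add_distrib]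
        refine Finset.sum_congr rfl fun j hj => ?_
        rw [step j]; ring

lemma keyId (n : ℕ) : ∀ j, ∑ m ∈ range (n+1), (-1:ℤ)^m * (m.choose j : ℤ) * surjCount n m
      = (-1:ℤ)^n * fA n j := by
  induction n with
  | zero =>
    intro j
    cases j with
    | zero => simp [fA, surjCount]
    | succ s =>
      have : fA 0 (s+1) = 0 := fA_zero_left s
      simp [this, surjCount]
  | succ n ih =>
    intro j
    have h0 : surjCount (n+1) 0 = 0 := rfl
    have hs : ∀ t : ℕ, (surjCount (n+1) (t+1) : ℤ)
        = ((t:ℤ)+1) * (surjCount n (t+1) + surjCount n t) := by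
      intro t
      have : surjCount (n+1) (t+1) = (t+1) * (surjCount n (t+1) + surjCount n t) := rfl
      rw [this]; push_cast; ring
    have shift : ∑ t ∈ range (n+1),
          ((-1:ℤ)^(t+1) * ((t:ℤ)+1) * (((t+1).choose j : ℕ) : ℤ) * surjCount n (t+1))
        = ∑ s ∈ range (n+1), ((-1:ℤ)^s * (s:ℤ) * ((s.choose j : ℕ) : ℤ) * surjCount n s) := by
      set h : ℕ → ℤ := fun s => (-1:ℤ)^s * (s:ℤ) * ((s.choose j : ℕ) : ℤ) * surjCount n s with hh
      have e1 : ∑ s ∈ range (n+2), h s = ∑ t ∈ range (n+1), h (t+1) + h 0 :=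
        Finset.sum_range_succ' h (n+1)
      have e2 : ∑ s ∈ range (n+2), h s = ∑ s ∈ range (n+1), h s + h (n+1) :=
        Finset.sum_range_succ h (n+1)
      have hz : h 0 = 0 := by simp [hh]
      have ht : h (n+1) = 0 := by
        simp [hh, surjCount_eq_zero n (n+1) (Nat.lt_succ_self n)]
      have e3 : ∑ t ∈ range (n+1), h (t+1) = ∑ s ∈ range (n+1), h s := by linarith
      rw [← e3]
      refine Finset.sum_congr rfl fun t _ => ?_
      simp only [hh]
      push_cast
      ring
    calc ∑ m ∈ range (n+2), (-1:ℤ)^m * (m.choose j : ℤ) * surjCount (n+1) m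
        = ∑ t ∈ range (n+1), (-1:ℤ)^(t+1) * (((t+1).choose j : ℕ) : ℤ) * surjCount (n+1) (t+1)
            + (-1:ℤ)^0 * (((0:ℕ).choose j : ℕ) : ℤ) * surjCount (n+1) 0 :=
          Finset.sum_range_succ' _ (n+1)
      _ = ∑ t ∈ range (n+1),
            ((-1:ℤ)^(t+1) * ((t:ℤ)+1) * (((t+1).choose j : ℕ) : ℤ) * surjCount n (t+1)
             + (-1:ℤ)^(t+1) * ((t:ℤ)+1) * (((t+1).choose j : ℕ) : ℤ) * surjCount n t) := by
          rw [h0]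
          push_cast
          rw [mul_zero, add_zero]
          refine Finset.sum_congr rfl fun t _ => ?_
          rw [hs t]; ring
      _ = ∑ t ∈ range (n+1),
            ((-1:ℤ)^t * (t:ℤ) * ((t.choose j : ℕ) : ℤ) * surjCount n t
             + (-1:ℤ)^(t+1) * ((t:ℤ)+1) * (((t+1).choose j : ℕ) : ℤ) * surjCount n t) := by
          rw [Finset.sum_add_distrib, Finset.sum_add_distrib, shift]
      _ = ∑ t ∈ range (n+1), (-1:ℤ)^(t+1) *
            (((j:ℤ)+1) * ((t.choose j : ℕ) : ℤ) + (j:ℤ) * ((t.choose (j-1) : ℕ) : ℤ))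
            * surjCount n t := by
          refine Finset.sum_congr rfl fun t _ => ?_
          have hca : ((t:ℤ)+1) * (((t+1).choose j : ℕ) : ℤ)
              = ((j:ℤ)+1) * ((t.choose j : ℕ) : ℤ) + (j:ℤ) * ((t.choose (j-1) : ℕ) : ℤ)
                + (t:ℤ) * ((t.choose j : ℕ) : ℤ) := by
            have := choose_aux t j
            cases j with
            | zero => simp at this ⊢; push_cast; omega
            | succ s =>
              have hcast : ((t+1) * (t+1).choose (s+1) : ℕ)
                  = ((s+1+1) * t.choose (s+1) + (s+1) * t.choose (s+1-1) + t * t.choose (s+1) : ℕ) := this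
              exact_mod_cast hcast
          rw [pow_succ]
          rw [show ((-1:ℤ)^t * (t:ℤ) * ((t.choose j : ℕ) : ℤ) * surjCount n t
             + (-1:ℤ)^t * (-1) * ((t:ℤ)+1) * (((t+1).choose j : ℕ) : ℤ) * surjCount n t)
             = (-1:ℤ)^t * ((t:ℤ) * ((t.choose j : ℕ) : ℤ) - ((t:ℤ)+1) * (((t+1).choose j : ℕ) : ℤ)) * surjCount n t by ring]
          rw [hca]; ring
      _ = (-1:ℤ)^(n+1) * fA (n+1) j := by
          have split : ∑ t ∈ range (n+1), (-1:ℤ)^(t+1) *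
                (((j:ℤ)+1) * ((t.choose j : ℕ) : ℤ) + (j:ℤ) * ((t.choose (j-1) : ℕ) : ℤ))
                * surjCount n t
              = -(((j:ℤ)+1) * ∑ t ∈ range (n+1), (-1:ℤ)^t * ((t.choose j : ℕ) : ℤ) * surjCount n t)
                - (j:ℤ) * ∑ t ∈ range (n+1), (-1:ℤ)^t * ((t.choose (j-1) : ℕ) : ℤ) * surjCount n t := by
            rw [Finset.mul_sum, Finset.mul_sum, ← neg_add', ← Finset.sum_add_distrib, ← Finset.sum_neg_distrib]
            refine Finset.sum_congr rfl fun t _ => ?_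
            rw [pow_succ]; ring
          rw [split, ih j, ih (j-1)]
          have hfa : (fA (n+1) j : ℤ) = ((j:ℤ)+1) * fA n j + (j:ℤ) * fA n (j-1) := by
            rw [fA_succ]; push_cast; ring
          rw [hfa, pow_succ]; ring


section Comb
variable {α : Type*} [Fintype α] [DecidableEq α] {m : ℕ}

private def kerDec (f : α → Fin m) : DecidableRel (Setoid.ker f).r :=
  fun a b => decidable_of_iff (f a = f b) Iff.rfl

def fiberP (f : α → Fin m) : Finpartition (univ : Finset α) :=
  @Finpartition.ofSetoid α _ _ (Setoid.ker f) (kerDec f)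

lemma mem_part_fiberP (f : α → Fin m) (a b : α) :
    b ∈ (fiberP f).part a ↔ f a = f b :=
  @Finpartition.mem_part_ofSetoid_iff_rel α _ _ _ (Setoid.ker f) (kerDec f) b

noncomputable def fiberLabel {f : α → Fin m} (hf : Function.Surjective f) :
    Fin m → ↥(fiberP f).parts :=
  fun y => ⟨(fiberP f).part (hf y).choose, (fiberP f).part_mem.2 (mem_univ _)⟩

lemma fiberLabel_bijective {f : α → Fin m} (hf : Function.Surjective f) :
    Function.Bijective (fiberLabel hf) := by
  constructor
  · intro y1 y2 h
    have h' : (fiberP f).part (hf y1).choose = (fiberP f).part (hf y2).choose :=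
      congrArg Subtype.val h
    have hmem : (hf y2).choose ∈ (fiberP f).part (hf y1).choose := by
      rw [h']; exact (fiberP f).mem_part (mem_univ _)
    have := (mem_part_fiberP f _ _).1 hmem
    rw [(hf y1).choose_spec, (hf y2).choose_spec] at this
    exact this
  · rintro ⟨p, hp⟩
    obtain ⟨a, _, ha⟩ := (fiberP f).part_surjOn hp
    refine ⟨f a, Subtype.ext ?_⟩
    show (fiberP f).part (hf (f a)).choose = p
    rw [← ha]
    have hmem : (hf (f a)).choose ∈ (fiberP f).part a := by
      rw [mem_part_fiberP]; exact ((hf (f a)).choose_spec).symm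
    exact ((fiberP f).mem_part_iff_part_eq_part (mem_univ _) (mem_univ _)).1 hmem

lemma card_parts_fiberP {f : α → Fin m} (hf : Function.Surjective f) :
    (fiberP f).parts.card = m := by
  have := Fintype.card_of_bijective (fiberLabel_bijective hf)
  simpa [Fintype.card_coe] using this.symm

noncomputable def fiberEquiv {f : α → Fin m} (hf : Function.Surjective f) :
    ↥(fiberP f).parts ≃ Fin m :=
  (Equiv.ofBijective _ (fiberLabel_bijective hf)).symm

lemma fiberEquiv_eq_iff {f : α → Fin m} (hf : Function.Surjective f)
    (p : ↥(fiberP f).parts) (y : Fin m) :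
    fiberEquiv hf p = y ↔ p = fiberLabel hf y := by
  rw [fiberEquiv, Equiv.symm_apply_eq]
  exact Iff.rfl

/-- From a partition with a labeling, the induced surjection. -/
noncomputable def partFun (P : Finpartition (univ : Finset α)) (e : ↥P.parts ≃ Fin m)
    (a : α) : Fin m :=
  e ⟨P.part a, P.part_mem.2 (mem_univ a)⟩

lemma partFun_surjective (P : Finpartition (univ : Finset α)) (e : ↥P.parts ≃ Fin m) :
    Function.Surjective (partFun P e) := by
  intro y
  obtain ⟨a, ha⟩ := P.nonempty_of_mem_parts (e.symm y).2
  have hpa : P.part a = (e.symm y).1 := P.part_eq_of_mem (e.symm y).2 ha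
  refine ⟨a, ?_⟩
  unfold partFun
  rw [show (⟨P.part a, P.part_mem.2 (mem_univ a)⟩ : ↥P.parts) = e.symm y from Subtype.ext hpa]
  exact e.apply_symm_apply y

lemma partFun_eq_iff (P : Finpartition (univ : Finset α)) (e : ↥P.parts ≃ Fin m)
    (a b : α) : partFun P e a = partFun P e b ↔ P.part a = P.part b := by
  constructor
  · intro h
    have := e.injective h
    exact congrArg Subtype.val this
  · intro h
    unfold partFun
    congr 1
    exact Subtype.ext h

lemma part_partFun (P : Finpartition (univ : Finset α)) (e : ↥P.parts ≃ Fin m) (a : α) :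
    (fiberP (partFun P e)).part a = P.part a := by
  ext b
  rw [mem_part_fiberP, partFun_eq_iff]
  constructor
  · intro h
    rw [h]; exact P.mem_part (mem_univ b)
  · intro hb
    exact ((P.mem_part_iff_part_eq_part (mem_univ b) (mem_univ a)).1 hb).symm

lemma fiberP_partFun (P : Finpartition (univ : Finset α)) (e : ↥P.parts ≃ Fin m) :
    fiberP (partFun P e) = P := by
  ext p
  constructor
  · intro hp
    obtain ⟨a, _, ha⟩ := (fiberP (partFun P e)).part_surjOn hp
    rw [← ha, part_partFun]
    exact P.part_mem.2 (mem_univ a)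
  · intro hp
    obtain ⟨a, _, ha⟩ := P.part_surjOn hp
    rw [← ha, ← part_partFun P e]
    exact (fiberP (partFun P e)).part_mem.2 (mem_univ a)



private lemma sigma_eq_aux {P Q : Finpartition (univ : Finset α)}
    (hP : P.parts.card = m) (hQ : Q.parts.card = m)
    (e1 : ↥P.parts ≃ Fin m) (e2 : ↥Q.parts ≃ Fin m) (h : P = Q)
    (he : ∀ (p : ↥P.parts) (hp : p.1 ∈ Q.parts), e1 p = e2 ⟨p.1, hp⟩) :
    (⟨⟨P, hP⟩, e1⟩ : Σ R : {R : Finpartition (univ : Finset α) // R.parts.card = m},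
        (↥R.1.parts ≃ Fin m)) = ⟨⟨Q, hQ⟩, e2⟩ := by
  subst h
  congr 1
  exact Equiv.ext fun p => he p p.2

noncomputable def surjEquivSigma (α : Type*) [Fintype α] [DecidableEq α] (m : ℕ) :
    {f : α → Fin m // Function.Surjective f} ≃
      Σ P : {P : Finpartition (univ : Finset α) // P.parts.card = m}, (↥P.1.parts ≃ Fin m) where
  toFun f := ⟨⟨fiberP f.1, card_parts_fiberP f.2⟩, fiberEquiv f.2⟩
  invFun x := ⟨partFun x.1.1 x.2, partFun_surjective _ _⟩
  left_inv := by
    rintro ⟨f, hf⟩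
    apply Subtype.ext
    funext a
    show fiberEquiv hf ⟨(fiberP f).part a, _⟩ = f a
    rw [fiberEquiv_eq_iff]
    apply Subtype.ext
    show (fiberP f).part a = (fiberP f).part (hf (f a)).choose
    have hmem : (hf (f a)).choose ∈ (fiberP f).part a := by
      rw [mem_part_fiberP]
      exact ((hf (f a)).choose_spec).symm
    exact (((fiberP f).mem_part_iff_part_eq_part (mem_univ _) (mem_univ _)).1 hmem).symm
  right_inv := by
    rintro ⟨⟨Q, hQ⟩, e⟩
    have hPQ : fiberP (partFun Q e) = Q := fiberP_partFun Q e
    apply sigma_eq_aux _ _ _ _ hPQ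
    intro p hp
    rw [fiberEquiv_eq_iff]
    apply Subtype.ext
    show p.1 = (fiberP (partFun Q e)).part
      ((partFun_surjective Q e (e ⟨p.1, hp⟩)).choose)
    have hcy : partFun Q e ((partFun_surjective Q e (e ⟨p.1, hp⟩)).choose)
        = e ⟨p.1, hp⟩ := (partFun_surjective Q e (e ⟨p.1, hp⟩)).choose_spec
    have h1 : (fiberP (partFun Q e)).part
          ((partFun_surjective Q e (e ⟨p.1, hp⟩)).choose)
        = Q.part ((partFun_surjective Q e (e ⟨p.1, hp⟩)).choose) :=
      part_partFun Q e _
    have h2 : Q.part ((partFun_surjective Q e (e ⟨p.1, hp⟩)).choose) = p.1 := by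
      have h3 : e ⟨Q.part ((partFun_surjective Q e (e ⟨p.1, hp⟩)).choose),
          Q.part_mem.2 (mem_univ _)⟩ = e ⟨p.1, hp⟩ := hcy
      exact congrArg Subtype.val (e.injective h3)
    rw [h1, h2]

lemma card_surjections (α : Type*) [Fintype α] [DecidableEq α] (m : ℕ) :
    Nat.card {f : α → Fin m // Function.Surjective f}
      = Nat.card {P : Finpartition (univ : Finset α) // P.parts.card = m} * m.factorial := by
  rw [Nat.card_congr (surjEquivSigma α m), Nat.card_eq_fintype_card, Nat.card_eq_fintype_card,
    Fintype.card_sigma]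
  have h : ∀ P : {P : Finpartition (univ : Finset α) // P.parts.card = m},
      Fintype.card (↥P.1.parts ≃ Fin m) = m.factorial := by
    intro P
    rw [Fintype.card_equiv (Fintype.equivFinOfCardEq (by simp [Fintype.card_coe, P.2]))]
    simp [Fintype.card_coe, P.2]
  rw [Finset.sum_congr rfl (fun P _ => h P), Finset.sum_const, smul_eq_mul,
    Finset.card_univ]

end Comb


section Rec
variable {γ : Type*} {m : ℕ}

private lemma elim_ne_none {f : Option γ → Fin (m+1)} (hf : Function.Surjective f)
    (h : ¬ Function.Surjective (fun a => f (some a))) :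
    ∀ a, f (some a) ≠ f none := by
  simp only [Function.Surjective, not_forall, not_exists] at h
  obtain ⟨z, hz⟩ := h
  obtain ⟨o, ho⟩ := hf z
  have hzeq : f none = z := by
    cases o with
    | none => exact ho
    | some a => exact absurd ho (hz a)
  intro a
  rw [hzeq]
  exact hz a

noncomputable def optionSurjEquiv (γ : Type*) (m : ℕ) :
    {f : Option γ → Fin (m+1) // Function.Surjective f} ≃
      ({g : γ → Fin (m+1) // Function.Surjective g} × Fin (m+1)) ⊕
        (Fin (m+1) × {g : γ → Fin m // Function.Surjective g}) := by
  classical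
  exact {
    toFun := fun f =>
      if h : Function.Surjective (fun a => f.1 (some a)) then
        Sum.inl (⟨fun a => f.1 (some a), h⟩, f.1 none)
      else
        Sum.inr (f.1 none,
          ⟨fun a => (finSuccAboveEquiv (f.1 none)).symm ⟨f.1 (some a), elim_ne_none f.2 h a⟩,
           by
            intro w
            obtain ⟨o, ho⟩ := f.2 ((finSuccAboveEquiv (f.1 none)) w).1
            have hone : o ≠ none := by
              intro hh
              subst hh
              exact ((finSuccAboveEquiv (f.1 none)) w).2 ho.symm
            obtain ⟨a, rfl⟩ := Option.ne_none_iff_exists'.1 hone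
            refine ⟨a, ?_⟩
            have heq : (⟨f.1 (some a), elim_ne_none f.2 h a⟩ :
                {x : Fin (m+1) // x ≠ f.1 none}) = (finSuccAboveEquiv (f.1 none)) w :=
              Subtype.ext ho
            show (finSuccAboveEquiv (f.1 none)).symm
              ⟨f.1 (some a), elim_ne_none f.2 h a⟩ = w
            rw [heq, Equiv.symm_apply_apply]⟩)
    invFun := fun x =>
      match x with
      | Sum.inl (⟨g, hg⟩, y) =>
          ⟨fun o => o.elim y g, by
            intro z
            obtain ⟨a, ha⟩ := hg z
            exact ⟨some a, ha⟩⟩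
      | Sum.inr (y, ⟨g, hg⟩) =>
          ⟨fun o => o.elim y (fun a => ((finSuccAboveEquiv y) (g a)).1), by
            intro z
            by_cases hz : z = y
            · exact ⟨none, hz.symm⟩
            · obtain ⟨a, ha⟩ := hg ((finSuccAboveEquiv y).symm ⟨z, hz⟩)
              refine ⟨some a, ?_⟩
              show ((finSuccAboveEquiv y) (g a)).1 = z
              rw [ha, Equiv.apply_symm_apply]⟩
    left_inv := by
      rintro ⟨f, hf⟩
      by_cases h : Function.Surjective (fun a => f (some a))
      · simp only [dif_pos h]
        apply Subtype.ext
        funext o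
        cases o <;> rfl
      · simp only [dif_neg h]
        apply Subtype.ext
        funext o
        cases o with
        | none => rfl
        | some a =>
          show ((finSuccAboveEquiv (f none))
            ((finSuccAboveEquiv (f none)).symm ⟨f (some a), elim_ne_none hf h a⟩)).1 = f (some a)
          rw [Equiv.apply_symm_apply]
    right_inv := by
      rintro (⟨⟨g, hg⟩, y⟩ | ⟨y, ⟨g, hg⟩⟩)
      · have h : Function.Surjective
            (fun a => (fun o : Option γ => o.elim y g) (some a)) := hg
        simp only [dif_pos h]
        rfl
      · have h : ¬ Function.Surjective
            (fun a => (fun o : Option γ => o.elim y (fun a => ((finSuccAboveEquiv y) (g a)).1))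
              (some a)) := by
          intro hsurj
          obtain ⟨a, ha⟩ := hsurj y
          exact ((finSuccAboveEquiv y) (g a)).2 ha
        simp only [dif_neg h]
        congr 1
        refine Prod.ext rfl ?_
        apply Subtype.ext
        funext a
        simp only [Equiv.symm_apply_eq]
        exact Subtype.ext rfl }

end Rec

section Rec
variable {α β : Type*} {m : ℕ}

def surjDomCongr (e : α ≃ β) (m : ℕ) :
    {f : α → Fin m // Function.Surjective f} ≃ {f : β → Fin m // Function.Surjective f} :=
  (Equiv.arrowCongr e (Equiv.refl (Fin m))).subtypeEquiv (fun f => by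
    constructor
    · intro hf z
      obtain ⟨a, ha⟩ := hf z
      exact ⟨e a, by simp [Equiv.arrowCongr, ha]⟩
    · intro hf z
      obtain ⟨b, hb⟩ := hf z
      exact ⟨e.symm b, by simpa [Equiv.arrowCongr] using hb⟩)

end Rec


lemma nat_card_surj (n m : ℕ) :
    Nat.card {f : Fin n → Fin m // Function.Surjective f} = surjCount n m := by
  induction n generalizing m with
  | zero =>
    cases m with
    | zero =>
      have : Unique {f : Fin 0 → Fin 0 // Function.Surjective f} :=
        { default := ⟨fun x => x.elim0, fun y => y.elim0⟩
          uniq := fun f => Subtype.ext (funext fun x => x.elim0) }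
      rw [Nat.card_unique]
      rfl
    | succ m =>
      have : IsEmpty {f : Fin 0 → Fin (m+1) // Function.Surjective f} :=
        ⟨fun f => by obtain ⟨a, _⟩ := f.2 0; exact a.elim0⟩
      rw [Nat.card_of_isEmpty]
      rfl
  | succ n ih =>
    cases m with
    | zero =>
      have : IsEmpty {f : Fin (n+1) → Fin 0 // Function.Surjective f} :=
        ⟨fun f => (f.1 0).elim0⟩
      rw [Nat.card_of_isEmpty]
      rfl
    | succ m =>
      rw [Nat.card_congr (surjDomCongr (finSuccEquiv n) (m+1)),
        Nat.card_congr (optionSurjEquiv (Fin n) m),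
        Nat.card_sum, Nat.card_prod, Nat.card_prod, ih (m+1), ih m]
      simp only [Nat.card_eq_fintype_card, Fintype.card_fin]
      show _ = (m + 1) * (surjCount n (m + 1) + surjCount n m)
      ring

/-- The Stirling number of the second kind `S(n,m)`: the number of partitions
of an `n`-element set into exactly `m` nonempty blocks. -/
noncomputable def stirling (n m : ℕ) : ℕ :=
  Nat.card {P : Finpartition (univ : Finset (Fin n)) // P.parts.card = m}

lemma stirling_mul_factorial (n m : ℕ) :
    stirling n m * m.factorial = surjCount n m := by
  rw [← nat_card_surj n m, card_surjections (Fin n) m]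
  rfl

lemma hfact (a b : ℕ) : ((b.factorial : ℤ)) * stirling a b = surjCount a b := by
  have h := stirling_mul_factorial a b
  have : ((stirling a b * b.factorial : ℕ) : ℤ) = (surjCount a b : ℤ) := by exact_mod_cast h
  push_cast at this
  linarith [this]

lemma hfA (a b : ℕ) : ((b.factorial : ℤ)) * stirling (a+1) (b+1) = fA a b := by
  have h1 : (((b+1).factorial : ℕ) : ℤ) * stirling (a+1) (b+1) = surjCount (a+1) (b+1) :=
    hfact (a+1) (b+1)
  have h2 : (surjCount (a+1) (b+1) : ℤ) = ((b:ℤ)+1) * fA a b := by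
    rw [surjCount_succ_succ]; push_cast; ring
  have h3 : (((b+1).factorial : ℕ) : ℤ) = ((b:ℤ)+1) * b.factorial := by
    rw [Nat.factorial_succ]; push_cast; ring
  have hb : ((b:ℤ)+1) ≠ 0 := by positivity
  apply mul_left_cancel₀ hb
  rw [← mul_assoc, ← h3, h1, h2]

/-- Brewbaker's identity (the two formulas for poly-Bernoulli numbers):
`∑_{m=0}^{min(n,k)} m!·S(n+1,m+1)·m!·S(k+1,m+1)
  = (−1)ⁿ·∑_{m=0}^{n} (−1)ᵐ·m!·S(n,m)·(m+1)ᵏ`. -/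
theorem poly_bernoulli_two_formulas (n k : ℕ) :
    ∑ m ∈ Finset.range (min n k + 1),
        ((m.factorial : ℤ) * stirling (n + 1) (m + 1) *
          (m.factorial * stirling (k + 1) (m + 1))) =
      (-1 : ℤ) ^ n *
        ∑ m ∈ Finset.range (n + 1),
          (-1 : ℤ) ^ m * m.factorial * stirling n m * (m + 1) ^ k := by
  have hL : ∑ m ∈ Finset.range (min n k + 1),
        ((m.factorial : ℤ) * stirling (n + 1) (m + 1) *
          (m.factorial * stirling (k + 1) (m + 1)))
      = ∑ m ∈ Finset.range (n+1), (fA n m : ℤ) * fA k m := by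
    rw [show ∑ m ∈ Finset.range (min n k + 1),
        ((m.factorial : ℤ) * stirling (n + 1) (m + 1) *
          (m.factorial * stirling (k + 1) (m + 1)))
        = ∑ m ∈ Finset.range (min n k + 1), (fA n m : ℤ) * fA k m from
      Finset.sum_congr rfl fun m _ => by rw [hfA n m, hfA k m]]
    apply Finset.sum_subset (Finset.range_subset_range.2 (by omega))
    intro x hx hnx
    have hxk : k < x := by
      simp only [Finset.mem_range] at hx hnx
      omega
    have hz : (fA k x : ℤ) = 0 := by
      have := fA_eq_zero hxk
      exact_mod_cast congrArg (Nat.cast : ℕ → ℤ) this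
    rw [hz, mul_zero]
  rw [hL]
  have hR1 : ∑ m ∈ Finset.range (n + 1),
        (-1 : ℤ) ^ m * m.factorial * stirling n m * (m + 1) ^ k
      = ∑ m ∈ Finset.range (n + 1),
        (-1 : ℤ) ^ m * surjCount n m * ((m:ℤ) + 1) ^ k := by
    refine Finset.sum_congr rfl fun m _ => ?_
    rw [show (-1 : ℤ) ^ m * m.factorial * stirling n m * ((m:ℤ) + 1) ^ k
        = (-1 : ℤ) ^ m * ((m.factorial : ℤ) * stirling n m) * ((m:ℤ) + 1) ^ k by ring,
      hfact n m]
  rw [hR1]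
  have hR2 : ∑ m ∈ Finset.range (n + 1),
        (-1 : ℤ) ^ m * surjCount n m * ((m:ℤ) + 1) ^ k
      = ∑ m ∈ Finset.range (n + 1), ∑ j ∈ Finset.range (n + 1),
          (-1 : ℤ) ^ m * (m.choose j : ℤ) * surjCount n m * fA k j := by
    refine Finset.sum_congr rfl fun m hm => ?_
    rw [pow_eq_sum k m]
    rw [show ∑ j ∈ Finset.range (m+1), (m.choose j : ℤ) * fA k j
        = ∑ j ∈ Finset.range (n+1), (m.choose j : ℤ) * fA k j from
      Finset.sum_subset (Finset.range_subset_range.2 (by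
        simp only [Finset.mem_range] at hm; omega))
        (fun x _ hnx => by
          have : m < x := by
            simp only [Finset.mem_range, not_lt] at hnx
            omega
          rw [Nat.choose_eq_zero_of_lt this]
          simp)]
    rw [Finset.mul_sum]
    exact Finset.sum_congr rfl fun j _ => by ring
  rw [hR2, Finset.sum_comm]
  have hR3 : ∑ j ∈ Finset.range (n + 1), ∑ m ∈ Finset.range (n + 1),
        (-1 : ℤ) ^ m * (m.choose j : ℤ) * surjCount n m * fA k j
      = ∑ j ∈ Finset.range (n + 1), ((-1:ℤ)^n * fA n j) * fA k j := by
    refine Finset.sum_congr rfl fun j _ => ?_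
    rw [← keyId n j, Finset.sum_mul]
  rw [hR3, Finset.mul_sum]
  refine Finset.sum_congr rfl fun j _ => ?_
  have hsq : (-1 : ℤ) ^ n * (-1 : ℤ) ^ n = 1 := by
    rw [← pow_add]
    exact Even.neg_one_pow ⟨n, rfl⟩
  calc (fA n j : ℤ) * fA k j = ((-1:ℤ)^n * (-1:ℤ)^n) * (fA n j * fA k j) := by rw [hsq]; ring
    _ = (-1:ℤ)^n * ((-1:ℤ)^n * fA n j * fA k j) := by ring
end

section
/- For all natural numbers n and k, the number of n×k lonesum 01 matrices (with no further restriction: all-zero rows and columns and arbitrary multiplicities allowed) equals ∑_{m=0}^{min(n,k)} m! · S(n+1, m+1) · m! · S(k+1, m+1). -/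
open Finset

namespace BrewAux

/-- Functions `Fin n → Fin (m+1)` hitting every nonzero value. -/
def B (n m : ℕ) : Type := {f : Fin n → Fin (m+1) // ∀ t : Fin (m+1), t ≠ 0 → ∃ i, f i = t}

instance (n m : ℕ) : Fintype (B n m) := by unfold B; infer_instance

variable {n k : ℕ}

/-- row sum -/
def rsum (M : Fin n → Fin k → Bool) (i : Fin n) : ℕ := (univ.filter fun j => M i j = true).card

/-- set of distinct nonzero row sums -/
def Rset (M : Fin n → Fin k → Bool) : Finset ℕ := (univ.image (rsum M)).erase 0

/-- transpose -/
def tr (M : Fin n → Fin k → Bool) : Fin k → Fin n → Bool := fun j i => M i j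

/-- rank of a row: number of distinct nonzero row sums that are `≤` its row sum -/
def frank (M : Fin n → Fin k → Bool) (i : Fin n) : ℕ :=
  ((Rset M).filter (· ≤ rsum M i)).card

lemma lonesum_tr {M : Fin n → Fin k → Bool} (hM : Lonesum M) : Lonesum (tr M) := by
  intro j j' i i' hj hi
  obtain ⟨h1, h2⟩ := hM i i' j j' hi hj
  unfold tr
  constructor <;> rintro ⟨a, b, c, d⟩
  · exact h1 ⟨a, c, b, d⟩
  · exact h2 ⟨a, c, b, d⟩

lemma chain_rows {M : Fin n → Fin k → Bool} (hM : Lonesum M) (i i' : Fin n) :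
    (∀ j, M i j = true → M i' j = true) ∨ (∀ j, M i' j = true → M i j = true) := by
  by_contra h
  push_neg at h
  obtain ⟨⟨j, hj1, hj2⟩, ⟨j', hj'1, hj'2⟩⟩ := h
  replace hj2 : M i' j = false := by simpa using hj2
  replace hj'2 : M i j' = false := by simpa using hj'2
  rcases lt_trichotomy i i' with hi | hi | hi
  · rcases lt_trichotomy j j' with hj | hj | hj
    · exact (hM i i' j j' hi hj).1 ⟨hj1, hj'2, hj2, hj'1⟩
    · subst hj; rw [hj1] at hj'2; cases hj'2
    · exact (hM i i' j' j hi hj).2 ⟨hj'2, hj1, hj'1, hj2⟩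
  · subst hi; rw [hj1] at hj2; cases hj2
  · rcases lt_trichotomy j j' with hj | hj | hj
    · exact (hM i' i j j' hi hj).2 ⟨hj2, hj'1, hj1, hj'2⟩
    · subst hj; rw [hj1] at hj'2; cases hj'2
    · exact (hM i' i j' j hi hj).1 ⟨hj'1, hj2, hj'2, hj1⟩

lemma row_mono {M : Fin n → Fin k → Bool} (hM : Lonesum M) {i i' : Fin n}
    (h : rsum M i ≤ rsum M i') : ∀ j, M i j = true → M i' j = true := by
  rcases chain_rows hM i i' with hc | hc
  · exact hc
  · have hsub : (univ.filter fun j => M i' j = true) ⊆ (univ.filter fun j => M i j = true) := by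
      intro j hj
      rw [mem_filter] at hj ⊢
      exact ⟨hj.1, hc j hj.2⟩
    have hcard : (univ.filter fun j => M i j = true).card ≤
        (univ.filter fun j => M i' j = true).card := h
    have := Finset.eq_of_subset_of_card_le hsub hcard
    intro j hj
    have : j ∈ (univ.filter fun j => M i' j = true) := by
      rw [this, mem_filter]; exact ⟨mem_univ j, hj⟩
    exact (mem_filter.1 this).2

lemma col_mono {M : Fin n → Fin k → Bool} (hM : Lonesum M) {j j' : Fin k}
    (h : rsum (tr M) j ≤ rsum (tr M) j') : ∀ i, M i j = true → M i j' = true :=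
  fun i => row_mono (lonesum_tr hM) h i

/-- rows belonging to some column of column-sum `s` -/
def Fs (M : Fin n → Fin k → Bool) (s : ℕ) : Finset (Fin n) :=
  univ.filter fun i => ∃ j₀, rsum (tr M) j₀ = s ∧ M i j₀ = true

/-- distinct row sums appearing in column `j` -/
def Dset (M : Fin n → Fin k → Bool) (j : Fin k) : Finset ℕ :=
  (univ.filter fun i => M i j = true).image (rsum M)

lemma Fs_eq {M : Fin n → Fin k → Bool} (hM : Lonesum M) {s : ℕ} {j₀ : Fin k}
    (h : rsum (tr M) j₀ = s) : Fs M s = univ.filter fun i => M i j₀ = true := by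
  ext i
  simp only [Fs, mem_filter, mem_univ, true_and]
  constructor
  · rintro ⟨j₁, hj₁, hij₁⟩
    exact col_mono hM (le_of_eq (hj₁.trans h.symm)) i hij₁
  · intro hij₀
    exact ⟨j₀, h, hij₀⟩

lemma csum_def (M : Fin n → Fin k → Bool) (j : Fin k) :
    rsum (tr M) j = (univ.filter fun i => M i j = true).card := rfl

lemma rsum_pos {M : Fin n → Fin k → Bool} {i : Fin n} {j : Fin k} (hij : M i j = true) :
    1 ≤ rsum M i :=
  Finset.card_pos.2 ⟨j, mem_filter.2 ⟨mem_univ j, hij⟩⟩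

lemma csum_pos {M : Fin n → Fin k → Bool} {i : Fin n} {j : Fin k} (hij : M i j = true) :
    1 ≤ rsum (tr M) j := by
  rw [csum_def]
  exact Finset.card_pos.2 ⟨i, mem_filter.2 ⟨mem_univ i, hij⟩⟩

lemma mem_Rset {M : Fin n → Fin k → Bool} {i : Fin n} (h : rsum M i ≠ 0) :
    rsum M i ∈ Rset M :=
  Finset.mem_erase.2 ⟨h, Finset.mem_image_of_mem _ (mem_univ i)⟩

lemma Dset_subset (M : Fin n → Fin k → Bool) (j : Fin k) : Dset M j ⊆ Rset M := by
  intro t ht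
  rw [Dset, mem_image] at ht
  obtain ⟨i, hi, rfl⟩ := ht
  rw [mem_filter] at hi
  exact mem_Rset (by have := rsum_pos hi.2; omega)

lemma exists_col_min {M : Fin n → Fin k → Bool} (hM : Lonesum M) {i : Fin n} {j : Fin k}
    (hij : M i j = true) :
    ∃ j₀, M i j₀ = true ∧ ∀ i', M i' j₀ = true → rsum M i ≤ rsum M i' := by
  obtain ⟨j₀, hj₀, hmin⟩ := Finset.exists_min_image (univ.filter fun j' => M i j' = true)
    (rsum (tr M)) ⟨j, mem_filter.2 ⟨mem_univ j, hij⟩⟩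
  rw [mem_filter] at hj₀
  refine ⟨j₀, hj₀.2, ?_⟩
  intro i' hi'
  by_contra hcon
  push_neg at hcon
  have hsub : (univ.filter fun j' => M i' j' = true) ⊆ (univ.filter fun j' => M i j' = true) := by
    intro j' hj'
    rw [mem_filter] at hj' ⊢
    exact ⟨hj'.1, row_mono hM (le_of_lt hcon) j' hj'.2⟩
  have hss : (univ.filter fun j' => M i' j' = true) ⊂ (univ.filter fun j' => M i j' = true) := by
    refine hsub.ssubset_of_ne ?_
    intro h
    have : rsum M i' = rsum M i := by rw [rsum, rsum, h]
    omega
  obtain ⟨j₁, hj₁, hj₁'⟩ := Finset.exists_of_ssubset hss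
  rw [mem_filter] at hj₁
  have hle : rsum (tr M) j₀ ≤ rsum (tr M) j₁ :=
    hmin j₁ (mem_filter.2 ⟨mem_univ j₁, hj₁.2⟩)
  have := col_mono hM hle i' hi'
  exact hj₁' (mem_filter.2 ⟨mem_univ j₁, this⟩)

lemma minimizer {M : Fin n → Fin k → Bool} (hM : Lonesum M) {s : ℕ}
    (hs : s ∈ Rset (tr M)) :
    ∃ i₀, (∃ j₀, rsum (tr M) j₀ = s ∧ M i₀ j₀ = true) ∧
      ∀ i₁ j₁, rsum (tr M) j₁ = s → M i₁ j₁ = true → rsum M i₀ ≤ rsum M i₁ := by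
  rw [Rset, Finset.mem_erase, mem_image] at hs
  obtain ⟨hs0, j₀, _, hj₀⟩ := hs
  have hcol : (univ.filter fun i => M i j₀ = true).Nonempty := by
    rw [← Finset.card_pos, ← csum_def, hj₀]
    omega
  obtain ⟨ia, hia⟩ := hcol
  rw [mem_filter] at hia
  have hFs : (Fs M s).Nonempty := ⟨ia, mem_filter.2 ⟨mem_univ ia, j₀, hj₀, hia.2⟩⟩
  obtain ⟨i₀, hi₀, hmin⟩ := Finset.exists_min_image (Fs M s) (rsum M) hFs
  rw [Fs, mem_filter] at hi₀
  refine ⟨i₀, hi₀.2, ?_⟩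
  intro i₁ j₁ hj₁ hij₁
  exact hmin i₁ (mem_filter.2 ⟨mem_univ i₁, j₁, hj₁, hij₁⟩)

/-- the main counting bijection : the rank-segment of column sums is equinumerous with the
distinct row sums appearing in the column. -/
lemma G {M : Fin n → Fin k → Bool} (hM : Lonesum M) (j : Fin k) :
    (((Rset (tr M)).filter (· ≤ rsum (tr M) j)).card) = (Dset M j).card := by
  apply Finset.card_bij (fun s hs => rsum M (minimizer hM (mem_filter.1 hs).1).choose)
  · intro s hs
    obtain ⟨⟨j₀, hj₀c, hj₀m⟩, _⟩ := (minimizer hM (mem_filter.1 hs).1).choose_spec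
    have hsle : s ≤ rsum (tr M) j := (mem_filter.1 hs).2
    have : M (minimizer hM (mem_filter.1 hs).1).choose j = true :=
      col_mono hM (by rw [hj₀c]; exact hsle) _ hj₀m
    exact mem_image_of_mem _ (mem_filter.2 ⟨mem_univ _, this⟩)
  · intro s₁ h₁ s₂ h₂ heq
    obtain ⟨⟨j₁, hj₁c, hj₁m⟩, hmin₁⟩ := (minimizer hM (mem_filter.1 h₁).1).choose_spec
    obtain ⟨⟨j₂, hj₂c, hj₂m⟩, hmin₂⟩ := (minimizer hM (mem_filter.1 h₂).1).choose_spec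
    set i₁ := (minimizer hM (mem_filter.1 h₁).1).choose
    set i₂ := (minimizer hM (mem_filter.1 h₂).1).choose
    have hsub12 : (univ.filter fun i => M i j₁ = true) ⊆ (univ.filter fun i => M i j₂ = true) := by
      intro i' hi'
      rw [mem_filter] at hi' ⊢
      have hle : rsum M i₂ ≤ rsum M i' := heq ▸ hmin₁ i' j₁ hj₁c hi'.2
      exact ⟨hi'.1, row_mono hM hle j₂ hj₂m⟩
    have hsub21 : (univ.filter fun i => M i j₂ = true) ⊆ (univ.filter fun i => M i j₁ = true) := by
      intro i' hi'
      rw [mem_filter] at hi' ⊢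
      have hle : rsum M i₁ ≤ rsum M i' := heq ▸ hmin₂ i' j₂ hj₂c hi'.2
      exact ⟨hi'.1, row_mono hM hle j₁ hj₁m⟩
    rw [← hj₁c, ← hj₂c, csum_def, csum_def]
    exact le_antisymm (card_le_card hsub12) (card_le_card hsub21)
  · intro b hb
    rw [Dset, mem_image] at hb
    obtain ⟨i, hifil, rfl⟩ := hb
    have hij : M i j = true := (mem_filter.1 hifil).2
    obtain ⟨j₀, hij₀, hmin0⟩ := exists_col_min hM hij
    have hs0 : rsum (tr M) j₀ ∈ Rset (tr M) := by
      apply Finset.mem_erase.2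
      refine ⟨by have := csum_pos hij₀; omega, Finset.mem_image_of_mem _ (mem_univ j₀)⟩
    have hsle : rsum (tr M) j₀ ≤ rsum (tr M) j := by
      rw [csum_def, csum_def]
      apply card_le_card
      intro i' hi'
      rw [mem_filter] at hi' ⊢
      exact ⟨hi'.1, row_mono hM (hmin0 i' hi'.2) j hij⟩
    have ha : rsum (tr M) j₀ ∈ (Rset (tr M)).filter (· ≤ rsum (tr M) j) :=
      mem_filter.2 ⟨hs0, hsle⟩
    refine ⟨rsum (tr M) j₀, ha, ?_⟩
    obtain ⟨⟨j₁, hj₁c, hj₁m⟩, hmin'⟩ := (minimizer hM (mem_filter.1 ha).1).choose_spec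
    set i₀ := (minimizer hM (mem_filter.1 ha).1).choose
    have h1 : rsum M i₀ ≤ rsum M i := hmin' i j₀ rfl hij₀
    have h2 : rsum M i ≤ rsum M i₀ := by
      have hcm : M i₀ j₀ = true := col_mono hM (le_of_eq hj₁c) i₀ hj₁m
      exact hmin0 i₀ hcm
    omega

lemma CR {M : Fin n → Fin k → Bool} (hM : Lonesum M) :
    (Rset (tr M)).card = (Rset M).card := by
  rcases Finset.eq_empty_or_nonempty (univ : Finset (Fin k)) with hk | hk
  · have h1 : Rset (tr M) = ∅ := by
      rw [Rset]
      have : (univ : Finset (Fin k)).image (rsum (tr M)) = ∅ := by rw [hk]; simp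
      rw [this]; simp
    have h2 : Rset M = ∅ := by
      apply Finset.eq_empty_of_forall_notMem
      intro t ht
      rw [Rset, Finset.mem_erase, mem_image] at ht
      obtain ⟨ht0, i, _, rfl⟩ := ht
      apply ht0
      rw [rsum]
      convert Finset.card_empty
      apply Finset.eq_empty_of_forall_notMem
      intro j
      exact fun _ => absurd (mem_univ j) (by rw [hk]; exact notMem_empty j)
    rw [h1, h2]
  · obtain ⟨jmax, _, hmax⟩ := Finset.exists_max_image univ (rsum (tr M)) hk
    have hfil : (Rset (tr M)).filter (· ≤ rsum (tr M) jmax) = Rset (tr M) := by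
      apply Finset.filter_true_of_mem
      intro s hs
      rw [Rset, Finset.mem_erase, mem_image] at hs
      obtain ⟨_, j₁, _, rfl⟩ := hs
      exact hmax j₁ (mem_univ j₁)
    have hD : Dset M jmax = Rset M := by
      apply Finset.Subset.antisymm (Dset_subset M jmax)
      intro t ht
      rw [Rset, Finset.mem_erase, mem_image] at ht
      obtain ⟨ht0, i, _, rfl⟩ := ht
      have : ∃ j', M i j' = true := by
        by_contra hc
        push_neg at hc
        apply ht0
        rw [rsum]
        convert Finset.card_empty
        apply Finset.filter_eq_empty_iff.2
        intro j' _
        simp [hc j']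
      obtain ⟨j', hj'⟩ := this
      have : M i jmax = true := col_mono hM (hmax j' (mem_univ j')) i hj'
      exact mem_image_of_mem _ (mem_filter.2 ⟨mem_univ i, this⟩)
    rw [← hfil, ← hD]
    exact G hM jmax

/-- generic rank-surjectivity lemma -/
lemma rank_onto (S : Finset ℕ) {u : ℕ} (hu : 1 ≤ u) (hum : u ≤ S.card) :
    ∃ t ∈ S, (S.filter (· ≤ t)).card = u := by
  set h : ℕ → ℕ := fun t => (S.filter (· ≤ t)).card with hh
  have hmono : ∀ a ∈ S, ∀ b ∈ S, a < b → h a < h b := by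
    intro a ha b hb hab
    apply Finset.card_lt_card
    constructor
    · intro x hx
      rw [mem_filter] at hx ⊢
      exact ⟨hx.1, le_of_lt (lt_of_le_of_lt hx.2 hab)⟩
    · intro hcon
      have : b ∈ S.filter (· ≤ b) := mem_filter.2 ⟨hb, le_refl b⟩
      have := hcon this
      rw [mem_filter] at this
      omega
  have hinj : Set.InjOn h S := by
    intro a ha b hb hab
    rcases lt_trichotomy a b with hl | hl | hl
    · exact absurd hab (ne_of_lt (hmono a ha b hb hl))
    · exact hl
    · exact absurd hab.symm (ne_of_lt (hmono b hb a ha hl))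
  have hsub : S.image h ⊆ Finset.Icc 1 S.card := by
    intro v hv
    rw [mem_image] at hv
    obtain ⟨t, ht, rfl⟩ := hv
    rw [Finset.mem_Icc]
    constructor
    · have : t ∈ S.filter (· ≤ t) := mem_filter.2 ⟨ht, le_refl t⟩
      exact Finset.card_pos.2 ⟨t, this⟩
    · exact Finset.card_le_card (filter_subset _ _)
  have hcard : (S.image h).card = (Finset.Icc 1 S.card).card := by
    rw [Finset.card_image_of_injOn hinj, Nat.card_Icc]
    omega
  have heq := Finset.eq_of_subset_of_card_le hsub (le_of_eq hcard.symm)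
  have : u ∈ S.image h := by
    rw [heq, Finset.mem_Icc]; exact ⟨hu, hum⟩
  rw [mem_image] at this
  obtain ⟨t, ht, htu⟩ := this
  exact ⟨t, ht, htu⟩

/-- generic segment/upward-closed counting lemma -/
lemma seg_lemma {S T : Finset ℕ} (hT : T ⊆ S)
    (hup : ∀ a ∈ T, ∀ b ∈ S, a ≤ b → b ∈ T) {x : ℕ} (hx : x ∈ S) :
    x ∈ T ↔ S.card < (S.filter (· ≤ x)).card + T.card := by
  set A := S.filter (· ≤ x) with hA
  constructor
  · intro hxT
    have hunion : A ∪ T = S := by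
      apply Finset.Subset.antisymm
      · exact Finset.union_subset (filter_subset _ _) hT
      · intro b hb
        rcases le_total b x with hbx | hbx
        · exact Finset.mem_union_left _ (mem_filter.2 ⟨hb, hbx⟩)
        · exact Finset.mem_union_right _ (hup x hxT b hb hbx)
    have hx' : x ∈ A ∩ T := Finset.mem_inter.2 ⟨mem_filter.2 ⟨hx, le_refl x⟩, hxT⟩
    have := Finset.card_union_add_card_inter A T
    have h1 : (A ∩ T).card ≥ 1 := Finset.card_pos.2 ⟨x, hx'⟩
    rw [hunion] at this
    omega
  · intro hcard
    by_contra hxT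
    have hdisj : Disjoint A T := by
      rw [Finset.disjoint_left]
      intro b hbA hbT
      rw [mem_filter] at hbA
      exact hxT (hup b hbT x hx hbA.2)
    have : (A ∪ T).card = A.card + T.card := Finset.card_union_of_disjoint hdisj
    have hsub : A ∪ T ⊆ S := Finset.union_subset (filter_subset _ _) hT
    have := Finset.card_le_card hsub
    omega

lemma main_iff {M : Fin n → Fin k → Bool} (hM : Lonesum M) (i : Fin n) (j : Fin k) :
    M i j = true ↔ (Rset M).card < frank M i + frank (tr M) j := by
  have hfr : frank (tr M) j = (Dset M j).card := G hM j
  by_cases hri : rsum M i = 0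
  · have hMij : M i j ≠ true := by
      intro h
      exact absurd hri (by have := rsum_pos h; omega)
    have hfi : frank M i = 0 := by
      rw [frank, Finset.card_eq_zero]
      apply Finset.eq_empty_of_forall_notMem
      intro x hx
      rw [mem_filter] at hx
      have := Finset.ne_of_mem_erase hx.1
      omega
    have hle : (Dset M j).card ≤ (Rset M).card := card_le_card (Dset_subset M j)
    constructor
    · intro h; exact absurd h hMij
    · intro h; omega
  · have hxR : rsum M i ∈ Rset M := mem_Rset hri
    have hseg := seg_lemma (Dset_subset M j) (fun a ha b hb hab => by
      rw [Dset, mem_image] at ha ⊢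
      obtain ⟨i₁, hi₁, rfl⟩ := ha
      rw [mem_filter] at hi₁
      rw [Rset, Finset.mem_erase, mem_image] at hb
      obtain ⟨hb0, i₂, _, rfl⟩ := hb
      exact ⟨i₂, mem_filter.2 ⟨mem_univ i₂, row_mono hM hab j hi₁.2⟩, rfl⟩) hxR
    have hmem : rsum M i ∈ Dset M j ↔ M i j = true := by
      constructor
      · intro h
        rw [Dset, mem_image] at h
        obtain ⟨i₁, hi₁, heq⟩ := h
        rw [mem_filter] at hi₁
        exact row_mono hM (le_of_eq heq) j hi₁.2
      · intro h
        exact mem_image_of_mem _ (mem_filter.2 ⟨mem_univ i, h⟩)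
    rw [← hmem, hseg, hfr, frank]

/-- the encoding of a pair of rank functions as a matrix -/
def enc (m : ℕ) (f : Fin n → Fin (m+1)) (g : Fin k → Fin (m+1)) : Fin n → Fin k → Bool :=
  fun i j => decide (m < (f i : ℕ) + (g j : ℕ))

lemma lonesum_enc (m : ℕ) (f : Fin n → Fin (m+1)) (g : Fin k → Fin (m+1)) :
    Lonesum (enc m f g) := by
  intro i i' j j' _ _
  constructor <;> rintro ⟨a, b, c, d⟩ <;>
    simp only [enc, decide_eq_true_eq, decide_eq_false_iff_not, not_lt] at a b c d <;> omega

lemma tr_enc (m : ℕ) (f : Fin n → Fin (m+1)) (g : Fin k → Fin (m+1)) :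
    tr (enc m f g) = enc m g f := by
  funext j i
  simp [tr, enc, Nat.add_comm]

lemma rsum_enc (m : ℕ) (f : Fin n → Fin (m+1)) (g : Fin k → Fin (m+1)) (i : Fin n) :
    rsum (enc m f g) i = (univ.filter fun j => m < (f i : ℕ) + (g j : ℕ)).card := by
  unfold rsum enc
  congr 1
  apply Finset.filter_congr
  intro j _
  simp

lemma W_zero (m : ℕ) (g : Fin k → Fin (m+1)) :
    (univ.filter fun j => m < 0 + (g j : ℕ)).card = 0 := by
  rw [Finset.card_eq_zero]
  apply Finset.filter_eq_empty_iff.2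
  intro j _
  have := (g j).is_le
  omega

lemma W_mono (m : ℕ) (g : Fin k → Fin (m+1)) {s s' : ℕ} (h : s ≤ s') :
    (univ.filter fun j => m < s + (g j : ℕ)).card ≤
      (univ.filter fun j => m < s' + (g j : ℕ)).card := by
  apply card_le_card
  intro j hj
  rw [mem_filter] at hj ⊢
  exact ⟨hj.1, by omega⟩

lemma W_strict (m : ℕ) (g : Fin k → Fin (m+1))
    (hg : ∀ t : Fin (m+1), t ≠ 0 → ∃ j, g j = t) {s s' : ℕ} (hs : s < s') (hs' : s' ≤ m) :
    (univ.filter fun j => m < s + (g j : ℕ)).card <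
      (univ.filter fun j => m < s' + (g j : ℕ)).card := by
  apply Finset.card_lt_card
  constructor
  · intro j hj
    rw [mem_filter] at hj ⊢
    exact ⟨hj.1, by omega⟩
  · intro hcon
    have hv : (⟨m + 1 - s', by omega⟩ : Fin (m+1)) ≠ 0 := by
      rw [Fin.ne_iff_vne]
      simp
      omega
    obtain ⟨j, hj⟩ := hg _ hv
    have hjval : (g j : ℕ) = m + 1 - s' := by rw [hj]
    have h1 : j ∈ univ.filter fun j => m < s' + (g j : ℕ) :=
      mem_filter.2 ⟨mem_univ j, by omega⟩
    have h2 := hcon h1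
    rw [mem_filter] at h2
    omega

lemma W_pos (m : ℕ) (g : Fin k → Fin (m+1))
    (hg : ∀ t : Fin (m+1), t ≠ 0 → ∃ j, g j = t) {s : ℕ} (hs : 1 ≤ s) (hsm : s ≤ m) :
    (univ.filter fun j => m < s + (g j : ℕ)).card ≠ 0 := by
  have := W_strict m g hg (s := 0) (s' := s) (by omega) hsm
  rw [W_zero] at this
  omega

lemma Rset_enc (m : ℕ) (f : Fin n → Fin (m+1)) (g : Fin k → Fin (m+1))
    (hf : ∀ t : Fin (m+1), t ≠ 0 → ∃ i, f i = t) (hg : ∀ t : Fin (m+1), t ≠ 0 → ∃ j, g j = t) :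
    Rset (enc m f g) = (Finset.Icc 1 m).image
      (fun s => (univ.filter fun j => m < s + (g j : ℕ)).card) := by
  ext t
  rw [Rset, Finset.mem_erase, mem_image, mem_image]
  constructor
  · rintro ⟨ht0, i, _, rfl⟩
    rw [rsum_enc]
    refine ⟨(f i : ℕ), ?_, rfl⟩
    rw [Finset.mem_Icc]
    have hle := (f i).is_le
    rcases Nat.eq_zero_or_pos (f i : ℕ) with h0 | h0
    · exfalso
      apply ht0
      rw [rsum_enc, h0, W_zero]
    · omega
  · rintro ⟨sv, hsv, rfl⟩
    rw [Finset.mem_Icc] at hsv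
    have hv : (⟨sv, by omega⟩ : Fin (m+1)) ≠ 0 := by
      rw [Fin.ne_iff_vne]; simp; omega
    obtain ⟨i, hi⟩ := hf _ hv
    have hival : (f i : ℕ) = sv := by rw [hi]
    refine ⟨W_pos m g hg hsv.1 hsv.2, i, mem_univ i, ?_⟩
    rw [rsum_enc, hival]

lemma card_Rset_enc (m : ℕ) (f : Fin n → Fin (m+1)) (g : Fin k → Fin (m+1))
    (hf : ∀ t : Fin (m+1), t ≠ 0 → ∃ i, f i = t) (hg : ∀ t : Fin (m+1), t ≠ 0 → ∃ j, g j = t) :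
    (Rset (enc m f g)).card = m := by
  rw [Rset_enc m f g hf hg, Finset.card_image_of_injOn, Nat.card_Icc]
  · omega
  · intro a ha b hb hab
    rw [Finset.coe_Icc, Set.mem_Icc] at ha hb
    rcases lt_trichotomy a b with h | h | h
    · exact absurd hab (ne_of_lt (W_strict m g hg h hb.2))
    · exact h
    · exact absurd hab.symm (ne_of_lt (W_strict m g hg h ha.2))

lemma frank_enc (m : ℕ) (f : Fin n → Fin (m+1)) (g : Fin k → Fin (m+1))
    (hf : ∀ t : Fin (m+1), t ≠ 0 → ∃ i, f i = t) (hg : ∀ t : Fin (m+1), t ≠ 0 → ∃ j, g j = t)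
    (i : Fin n) : frank (enc m f g) i = (f i : ℕ) := by
  rw [frank, rsum_enc, Rset_enc m f g hf hg]
  rcases Nat.eq_zero_or_pos (f i : ℕ) with h0 | h0
  · rw [h0, W_zero]
    rw [Finset.card_eq_zero]
    apply Finset.eq_empty_of_forall_notMem
    intro t ht
    rw [mem_filter, mem_image] at ht
    obtain ⟨⟨sv, hsv, rfl⟩, hle⟩ := ht
    rw [Finset.mem_Icc] at hsv
    have := W_pos m g hg hsv.1 hsv.2
    omega
  · have hfile := (f i).is_le
    have heq : ((Finset.Icc 1 m).image fun s => (univ.filter fun j => m < s + (g j : ℕ)).card).filter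
        (· ≤ (univ.filter fun j => m < (f i : ℕ) + (g j : ℕ)).card) =
        (Finset.Icc 1 (f i : ℕ)).image fun s => (univ.filter fun j => m < s + (g j : ℕ)).card := by
      ext t
      rw [mem_filter, mem_image, mem_image]
      constructor
      · rintro ⟨⟨sv, hsv, rfl⟩, hle⟩
        rw [Finset.mem_Icc] at hsv
        refine ⟨sv, ?_, rfl⟩
        rw [Finset.mem_Icc]
        refine ⟨hsv.1, ?_⟩
        by_contra hc
        push_neg at hc
        have := W_strict m g hg hc hsv.2
        omega
      · rintro ⟨sv, hsv, rfl⟩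
        rw [Finset.mem_Icc] at hsv
        refine ⟨⟨sv, Finset.mem_Icc.2 ⟨hsv.1, le_trans hsv.2 hfile⟩, rfl⟩, W_mono m g hsv.2⟩
    rw [heq, Finset.card_image_of_injOn, Nat.card_Icc]
    · omega
    · intro a ha b hb hab
      rw [Finset.coe_Icc, Set.mem_Icc] at ha hb
      rcases lt_trichotomy a b with h | h | h
      · exact absurd hab (ne_of_lt (W_strict m g hg h (le_trans hb.2 hfile)))
      · exact h
      · exact absurd hab.symm (ne_of_lt (W_strict m g hg h (le_trans ha.2 hfile)))

section Decode

variable {M : Fin n → Fin k → Bool} (hM : Lonesum M)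

lemma card_Rset_le_left : (Rset M).card ≤ n := by
  calc (Rset M).card ≤ (univ.image (rsum M)).card := card_le_card (Finset.erase_subset _ _)
    _ ≤ (univ : Finset (Fin n)).card := Finset.card_image_le
    _ = n := by rw [Finset.card_univ, Fintype.card_fin]

lemma frank_le (i : Fin n) : frank M i ≤ (Rset M).card := card_le_card (filter_subset _ _)

lemma frank_onto {u : ℕ} (hu : 1 ≤ u) (hum : u ≤ (Rset M).card) :
    ∃ i, frank M i = u := by
  obtain ⟨t, ht, hcard⟩ := rank_onto (Rset M) hu hum
  rw [Rset, Finset.mem_erase, mem_image] at ht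
  obtain ⟨ht0, i, _, rfl⟩ := ht
  exact ⟨i, hcard⟩

end Decode

/-- The master bijection: lonesum matrices are exactly encodings of pairs of rank functions. -/
lemma key_bijection (n k : ℕ) :
    Nat.card {M : Fin n → Fin k → Bool // Lonesum M} =
      ∑ m ∈ Finset.range (min n k + 1), Nat.card (B n m) * Nat.card (B k m) := by
  set K := min n k + 1 with hK
  let E : (Σ m : Fin K, B n (m : ℕ) × B k (m : ℕ)) → {M : Fin n → Fin k → Bool // Lonesum M} :=
    fun p => ⟨enc (p.1 : ℕ) p.2.1.1 p.2.2.1, lonesum_enc _ _ _⟩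
  have hinj : Function.Injective E := by
    rintro ⟨⟨m1, hm1⟩, ⟨f1, hf1⟩, ⟨g1, hg1⟩⟩ ⟨⟨m2, hm2⟩, ⟨f2, hf2⟩, ⟨g2, hg2⟩⟩ h
    have hX : enc m1 f1 g1 = enc m2 f2 g2 := congrArg Subtype.val h
    have hm : m1 = m2 := by
      have h1 := card_Rset_enc m1 f1 g1 hf1 hg1
      have h2 := card_Rset_enc m2 f2 g2 hf2 hg2
      rw [← h1, ← h2, hX]
    subst hm
    have hf : f1 = f2 := by
      funext i
      apply Fin.ext
      have h1 := frank_enc m1 f1 g1 hf1 hg1 i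
      have h2 := frank_enc m1 f2 g2 hf2 hg2 i
      rw [← h1, ← h2, hX]
    have hg : g1 = g2 := by
      funext j
      apply Fin.ext
      have h1 := frank_enc m1 g1 f1 hg1 hf1 j
      have h2 := frank_enc m1 g2 f2 hg2 hf2 j
      rw [← tr_enc m1 f1 g1] at h1
      rw [← tr_enc m1 f2 g2] at h2
      rw [← h1, ← h2, hX]
    subst hf
    subst hg
    rfl
  have hsurj : Function.Surjective E := by
    rintro ⟨M, hM⟩
    set m' := (Rset M).card with hm'
    have hlen : m' ≤ n := card_Rset_le_left
    have hlek : m' ≤ k := by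
      rw [hm', ← CR hM]
      exact card_Rset_le_left
    have hltK : m' < K := by omega
    let f' : Fin n → Fin (m' + 1) := fun i => ⟨frank M i, by have := frank_le (M := M) i; omega⟩
    let g' : Fin k → Fin (m' + 1) := fun j => ⟨frank (tr M) j,
      by have := frank_le (M := tr M) j; rw [CR hM] at this; omega⟩
    have hf' : ∀ t : Fin (m' + 1), t ≠ 0 → ∃ i, f' i = t := by
      intro t ht
      have ht1 : 1 ≤ (t : ℕ) := by
        rcases Nat.eq_zero_or_pos (t : ℕ) with h | h
        · exact absurd (Fin.ext h) ht
        · exact h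
      obtain ⟨i, hi⟩ := frank_onto (M := M) ht1 t.is_le
      exact ⟨i, Fin.ext hi⟩
    have hg' : ∀ t : Fin (m' + 1), t ≠ 0 → ∃ j, g' j = t := by
      intro t ht
      have ht1 : 1 ≤ (t : ℕ) := by
        rcases Nat.eq_zero_or_pos (t : ℕ) with h | h
        · exact absurd (Fin.ext h) ht
        · exact h
      have htle : (t : ℕ) ≤ (Rset (tr M)).card := by
        have := t.is_le
        rw [CR hM]
        omega
      obtain ⟨j, hj⟩ := frank_onto (M := tr M) ht1 htle
      exact ⟨j, Fin.ext hj⟩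
    refine ⟨⟨⟨m', hltK⟩, ⟨f', hf'⟩, ⟨g', hg'⟩⟩, ?_⟩
    apply Subtype.ext
    funext i j
    show enc m' f' g' i j = M i j
    cases hMij : M i j with
    | true =>
      have := (main_iff hM i j).1 hMij
      simp only [enc, f', g', decide_eq_true_eq]
      omega
    | false =>
      have : ¬((Rset M).card < frank M i + frank (tr M) j) := by
        intro hc
        rw [(main_iff hM i j).2 hc] at hMij
        cases hMij
      simp only [enc, f', g', decide_eq_false_iff_not, not_lt]
      omega
  have hcard := Nat.card_congr (Equiv.ofBijective E ⟨hinj, hsurj⟩)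
  rw [← hcard, Nat.card_eq_fintype_card, Fintype.card_sigma]
  rw [← Fin.sum_univ_eq_sum_range (fun m => Nat.card (B n m) * Nat.card (B k m)) K]
  apply Finset.sum_congr rfl
  intro m _
  rw [Fintype.card_prod, Nat.card_eq_fintype_card, Nat.card_eq_fintype_card]

/-- Counting surjections by fiber partitions. -/
lemma card_surj (N M : ℕ) :
    Nat.card {g : Fin N → Fin M // Function.Surjective g} =
      Nat.card {P : Finpartition (univ : Finset (Fin N)) // P.parts.card = M} *
        Nat.factorial M := by
  classical
  let Ψ : (Σ P : {P : Finpartition (univ : Finset (Fin N)) // P.parts.card = M},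
      (Fin M ≃ {x // x ∈ P.1.parts})) → {g : Fin N → Fin M // Function.Surjective g} :=
    fun p => ⟨fun x => p.2.symm ⟨p.1.1.part x, p.1.1.part_mem.2 (mem_univ x)⟩, by
      intro v
      obtain ⟨x, hx⟩ := p.1.1.nonempty_of_mem_parts (p.2 v).2
      refine ⟨x, ?_⟩
      have : p.1.1.part x = (p.2 v).1 := p.1.1.part_eq_of_mem (p.2 v).2 hx
      show p.2.symm ⟨p.1.1.part x, _⟩ = v
      rw [show (⟨p.1.1.part x, p.1.1.part_mem.2 (mem_univ x)⟩ :
        {x // x ∈ p.1.1.parts}) = p.2 v from Subtype.ext this, Equiv.symm_apply_apply]⟩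
  have hinj : Function.Injective Ψ := by
    rintro ⟨⟨P, hP⟩, e⟩ ⟨⟨Q, hQ⟩, d⟩ h
    have hg := congrArg Subtype.val h
    simp only [Ψ] at hg
    set g : Fin N → Fin M := fun x => e.symm ⟨P.part x, P.part_mem.2 (mem_univ x)⟩ with hgdef
    have hpart : ∀ x y : Fin N, y ∈ P.part x ↔ g y = g x := by
      intro x y
      constructor
      · intro hy
        have : P.part y = P.part x := P.part_eq_of_mem (P.part_mem.2 (mem_univ x)) hy
        simp only [hgdef]
        congr 1
        exact Subtype.ext this
      · intro hgy
        have : (⟨P.part y, P.part_mem.2 (mem_univ y)⟩ : {x // x ∈ P.parts}) =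
            ⟨P.part x, P.part_mem.2 (mem_univ x)⟩ := e.symm.injective hgy
        have hyx : P.part y = P.part x := congrArg Subtype.val this
        rw [← hyx]
        exact P.mem_part (mem_univ y)
    have hpartQ : ∀ x y : Fin N, y ∈ Q.part x ↔ g y = g x := by
      intro x y
      constructor
      · intro hy
        have : Q.part y = Q.part x := Q.part_eq_of_mem (Q.part_mem.2 (mem_univ x)) hy
        have h1 := congrFun hg y
        have h2 := congrFun hg x
        rw [h1, h2]
        congr 1
        exact Subtype.ext this
      · intro hgy
        have h1 := congrFun hg y
        have h2 := congrFun hg x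
        rw [h1, h2] at hgy
        have : (⟨Q.part y, Q.part_mem.2 (mem_univ y)⟩ : {x // x ∈ Q.parts}) =
            ⟨Q.part x, Q.part_mem.2 (mem_univ x)⟩ := d.symm.injective hgy
        have hyx : Q.part y = Q.part x := congrArg Subtype.val this
        rw [← hyx]
        exact Q.mem_part (mem_univ y)
    have hPQpart : ∀ x, P.part x = Q.part x := by
      intro x
      ext y
      rw [hpart, hpartQ]
    have hPQ : P = Q := by
      ext b
      constructor
      · intro hb
        obtain ⟨x, hx⟩ := P.nonempty_of_mem_parts hb
        have : b = P.part x := (P.part_eq_of_mem hb hx).symm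
        rw [this, hPQpart]
        exact Q.part_mem.2 (mem_univ x)
      · intro hb
        obtain ⟨x, hx⟩ := Q.nonempty_of_mem_parts hb
        have : b = Q.part x := (Q.part_eq_of_mem hb hx).symm
        rw [this, ← hPQpart]
        exact P.part_mem.2 (mem_univ x)
    subst hPQ
    have hed : e = d := by
      have hsymm : e.symm = d.symm := by
        apply Equiv.ext
        rintro ⟨b, hb⟩
        obtain ⟨x, hx⟩ := P.nonempty_of_mem_parts hb
        have hbx : b = P.part x := (P.part_eq_of_mem hb hx).symm
        subst hbx
        have h1 := congrFun hg x
        exact h1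
      rw [← e.symm_symm, hsymm, d.symm_symm]
    subst hed
    rfl
  have hsurj : Function.Surjective Ψ := by
    rintro ⟨g, hg⟩
    letI : DecidableRel (Setoid.ker g).r := fun a b => decidable_of_iff (g a = g b) Iff.rfl
    set P : Finpartition (univ : Finset (Fin N)) := Finpartition.ofSetoid (Setoid.ker g) with hPdef
    have hmem : ∀ a b : Fin N, b ∈ P.part a ↔ g a = g b := fun a b =>
      Finpartition.mem_part_ofSetoid_iff_rel
    have hclass : ∀ a b : Fin N, g a = g b → P.part a = P.part b := by
      intro a b hab
      exact (P.part_eq_of_mem (P.part_mem.2 (mem_univ a)) ((hmem a b).2 hab)).symm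
    let ψ : Fin M → {x // x ∈ P.parts} :=
      fun v => ⟨P.part (Function.surjInv hg v), P.part_mem.2 (mem_univ _)⟩
    have hψbij : Function.Bijective ψ := by
      constructor
      · intro v v' h
        have hpp : P.part (Function.surjInv hg v) = P.part (Function.surjInv hg v') :=
          congrArg Subtype.val h
        have : Function.surjInv hg v' ∈ P.part (Function.surjInv hg v) := by
          rw [hpp]
          exact P.mem_part (mem_univ _)
        have := (hmem _ _).1 this
        rw [Function.surjInv_eq hg, Function.surjInv_eq hg] at this
        exact this
      · rintro ⟨b, hb⟩
        obtain ⟨x, hx⟩ := P.nonempty_of_mem_parts hb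
        refine ⟨g x, Subtype.ext ?_⟩
        show P.part (Function.surjInv hg (g x)) = b
        rw [hclass _ x (Function.surjInv_eq hg (g x))]
        exact P.part_eq_of_mem hb hx
    have hPcard : P.parts.card = M := by
      have := Fintype.card_congr (Equiv.ofBijective ψ hψbij)
      rw [Fintype.card_fin, Fintype.card_coe] at this
      exact this.symm
    refine ⟨⟨⟨P, hPcard⟩, Equiv.ofBijective ψ hψbij⟩, Subtype.ext ?_⟩
    funext x
    show (Equiv.ofBijective ψ hψbij).symm ⟨P.part x, P.part_mem.2 (mem_univ x)⟩ = g x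
    rw [Equiv.symm_apply_eq]
    show (⟨P.part x, _⟩ : {x // x ∈ P.parts}) = ψ (g x)
    apply Subtype.ext
    show P.part x = P.part (Function.surjInv hg (g x))
    exact hclass x _ (Function.surjInv_eq hg (g x)).symm
  have hcard := Nat.card_congr (Equiv.ofBijective Ψ ⟨hinj, hsurj⟩)
  rw [← hcard, Nat.card_eq_fintype_card, Fintype.card_sigma]
  have hterm : ∀ P : {P : Finpartition (univ : Finset (Fin N)) // P.parts.card = M},
      Fintype.card (Fin M ≃ {x // x ∈ P.1.parts}) = Nat.factorial M := by
    intro P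
    have hc : Fintype.card {x // x ∈ P.1.parts} = M := by
      rw [Fintype.card_coe]; exact P.2
    have e0 : Fin M ≃ {x // x ∈ P.1.parts} := (Fintype.equivFinOfCardEq hc).symm
    rw [Fintype.card_equiv e0, Fintype.card_fin]
  rw [Finset.sum_congr rfl (fun P _ => hterm P), Finset.sum_const, smul_eq_mul,
    Finset.card_univ, Nat.card_eq_fintype_card]

/-- Splitting off the value at the last coordinate. -/
lemma card_surj_split (n m : ℕ) :
    Nat.card {g : Fin (n+1) → Fin (m+1) // Function.Surjective g} =
      (m + 1) * Nat.card (B n m) := by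
  let D : {g : Fin (n+1) → Fin (m+1) // Function.Surjective g} → Fin (m+1) × B n m :=
    fun g => ⟨g.1 (Fin.last n),
      ⟨fun i => Equiv.swap 0 (g.1 (Fin.last n)) (g.1 i.castSucc), by
        intro t ht
        obtain ⟨x, hx⟩ := g.2 (Equiv.swap 0 (g.1 (Fin.last n)) t)
        rcases Fin.eq_castSucc_or_eq_last x with ⟨y, rfl⟩ | rfl
        · refine ⟨y, ?_⟩
          show Equiv.swap 0 (g.1 (Fin.last n)) (g.1 y.castSucc) = t
          rw [hx, Equiv.swap_apply_self]
        · exfalso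
          apply ht
          have : Equiv.swap 0 (g.1 (Fin.last n)) t = g.1 (Fin.last n) := hx.symm
          have h2 := congrArg (Equiv.swap 0 (g.1 (Fin.last n))) this
          rw [Equiv.swap_apply_self, Equiv.swap_apply_right] at h2
          exact h2⟩⟩
  have hinj : Function.Injective D := by
    rintro ⟨g, hg⟩ ⟨g', hg'⟩ h
    simp only [D, Prod.mk.injEq, Subtype.mk.injEq] at h
    obtain ⟨h1, h2⟩ := Prod.mk.inj h
    apply Subtype.ext
    funext x
    rcases Fin.eq_castSucc_or_eq_last x with ⟨y, rfl⟩ | rfl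
    · have h3 : Equiv.swap 0 (g (Fin.last n)) (g y.castSucc)
          = Equiv.swap 0 (g' (Fin.last n)) (g' y.castSucc) :=
        congrFun (congrArg Subtype.val h2) y
      rw [h1] at h3
      exact Equiv.injective _ h3
    · exact h1
  have hsurj : Function.Surjective D := by
    rintro ⟨v, ⟨f, hf⟩⟩
    refine ⟨⟨Fin.snoc (fun i => Equiv.swap 0 v (f i)) v, ?_⟩, ?_⟩
    · intro u
      by_cases hu : u = v
      · exact ⟨Fin.last n, by rw [Fin.snoc_last, hu]⟩
      · have ht : Equiv.swap 0 v u ≠ 0 := by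
          intro h
          apply hu
          have := congrArg (Equiv.swap 0 v) h
          rw [Equiv.swap_apply_self, Equiv.swap_apply_left] at this
          exact this
        obtain ⟨i, hi⟩ := hf _ ht
        refine ⟨i.castSucc, ?_⟩
        rw [Fin.snoc_castSucc, hi, Equiv.swap_apply_self]
    · simp only [D, Fin.snoc_last]
      refine Prod.ext rfl (Subtype.ext ?_)
      funext i
      simp only [Fin.snoc_castSucc, Equiv.swap_apply_self]
  have := Nat.card_congr (Equiv.ofBijective D ⟨hinj, hsurj⟩)
  rw [this, Nat.card_eq_fintype_card, Fintype.card_prod, Fintype.card_fin,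
    Nat.card_eq_fintype_card]

lemma card_B (n m : ℕ) : Nat.card (B n m) = Nat.factorial m * stirling (n+1) (m+1) := by
  have h1 := card_surj (n+1) (m+1)
  have h2 := card_surj_split n m
  rw [h2] at h1
  apply Nat.eq_of_mul_eq_mul_left (show 0 < m + 1 by omega)
  rw [h1, stirling, Nat.factorial_succ]
  ring

end BrewAux

/-- Brewbaker's theorem: the number of `n × k` lonesum 01 matrices equals
`∑_{m=0}^{min(n,k)} m!·S(n+1,m+1)·m!·S(k+1,m+1)`. -/
theorem card_lonesum_eq (n k : ℕ) :
    Nat.card {M : Fin n → Fin k → Bool // Lonesum M} =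
      ∑ m ∈ Finset.range (min n k + 1),
        m.factorial * stirling (n + 1) (m + 1) *
          (m.factorial * stirling (k + 1) (m + 1)) := by
  rw [BrewAux.key_bijection]
  refine Finset.sum_congr rfl fun m _ => ?_
  rw [BrewAux.card_B, BrewAux.card_B]
end
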